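/- arXiv:1009.3993 — 3 statements merged into one kernel-verified Lean document; each statement's English description precedes it below -/
import Mathlib

section
/- Let Φ : ℝⁿ → ℝ be a C² function whose gradient ∇Φ = (∂Φ/∂x_1, …, ∂Φ/∂x_n) has bounded C¹ norm. Then the Cauchy problem for the multidimensional Burgers system ∂u/∂t + Σ_{j=1}^n u_j ∂u/∂x_j = 0 on [0,∞) × ℝⁿ with initial data u(0,x) = ∇Φ(x) has a unique global C¹ solution on [0,∞) × ℝⁿ if and only if the Hessian matrix Hess Φ(x) is positive semidefinite for every x ∈ ℝⁿ. -/
open Set Matrix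
open scoped NNReal


/-- The gradient `∇Φ(x) = (∂Φ/∂x₁, …, ∂Φ/∂xₙ)(x)`. -/
noncomputable def gradFn {n : ℕ} (Φ : (Fin n → ℝ) → ℝ) (x : Fin n → ℝ) : Fin n → ℝ :=
  fun i => fderiv ℝ Φ x (Pi.single i 1)

/-- The Hessian matrix `Hess Φ(x) = (∂²Φ/∂xᵢ∂xⱼ)(x)`. -/
noncomputable def hessMat {n : ℕ} (Φ : (Fin n → ℝ) → ℝ) (x : Fin n → ℝ) :
    Matrix (Fin n) (Fin n) ℝ :=
  Matrix.of fun i j => iteratedFDeriv ℝ 2 Φ x ![Pi.single i 1, Pi.single j 1]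

/-- `u : ℝ → (Fin n → ℝ) → (Fin n → ℝ)` is a global `C^k` solution on `[0,∞) × ℝⁿ` of the
multidimensional Burgers system `∂u/∂t + ∑ⱼ uⱼ ∂u/∂xⱼ = 0` with initial data `φ`. -/
def IsGlobalSolBurgers (n : ℕ) (φ : (Fin n → ℝ) → (Fin n → ℝ)) (k : ℕ∞)
    (u : ℝ → (Fin n → ℝ) → (Fin n → ℝ)) : Prop :=
  ContDiffOn ℝ k (fun p : ℝ × (Fin n → ℝ) => u p.1 p.2) (Set.Ici 0 ×ˢ Set.univ) ∧
  (∀ x, u 0 x = φ x) ∧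
  ∀ t ∈ Set.Ici (0 : ℝ), ∀ x : Fin n → ℝ, ∀ i : Fin n,
    derivWithin (fun s => u s x i) (Set.Ici 0) t
      + ∑ j : Fin n, u t x j * fderiv ℝ (fun y => u t y i) x (Pi.single j 1) = 0

namespace BurgersAux

variable {n : ℕ} {Φ : (Fin n → ℝ) → ℝ}

lemma contDiff_gradFn (hΦ : ContDiff ℝ 2 Φ) : ContDiff ℝ 1 (gradFn Φ) := by
  rw [contDiff_pi]
  intro i
  exact (hΦ.fderiv_right (by norm_num)).clm_apply contDiff_const

lemma fderiv_gradFn_apply (hΦ : ContDiff ℝ 2 Φ) (y w : Fin n → ℝ) :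
    fderiv ℝ (gradFn Φ) y w = fun i => fderiv ℝ (fderiv ℝ Φ) y w (Pi.single i 1) := by
  have hf' : ContDiff ℝ 1 (fderiv ℝ Φ) := hΦ.fderiv_right (by norm_num)
  have h1 : ∀ i : Fin n, HasFDerivAt (fun x => gradFn Φ x i)
      ((ContinuousLinearMap.apply ℝ ℝ (Pi.single i 1)).comp
        (fderiv ℝ (fderiv ℝ Φ) y)) y := by
    intro i
    exact (ContinuousLinearMap.apply ℝ ℝ (Pi.single i 1)).hasFDerivAt.comp y
      (hf'.differentiable one_ne_zero y).hasFDerivAt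
  have : HasFDerivAt (gradFn Φ)
      (ContinuousLinearMap.pi fun i => (ContinuousLinearMap.apply ℝ ℝ (Pi.single i 1)).comp
        (fderiv ℝ (fderiv ℝ Φ) y)) y := hasFDerivAt_pi.2 h1
  rw [this.fderiv]
  rfl

lemma hessMat_apply (x : Fin n → ℝ) (i j : Fin n) :
    hessMat Φ x i j = fderiv ℝ (fderiv ℝ Φ) x (Pi.single i 1) (Pi.single j 1) := by
  simp [hessMat, iteratedFDeriv_two_apply]

lemma sndFDeriv_symm (hΦ : ContDiff ℝ 2 Φ) (x a b : Fin n → ℝ) :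
    fderiv ℝ (fderiv ℝ Φ) x a b = fderiv ℝ (fderiv ℝ Φ) x b a :=
  (hΦ.contDiffAt.isSymmSndFDerivAt (by norm_num)).eq a b

lemma isHermitian_hessMat (hΦ : ContDiff ℝ 2 Φ) (x : Fin n → ℝ) :
    (hessMat Φ x).IsHermitian := by
  ext i j
  simp only [Matrix.conjTranspose_apply, star_trivial, hessMat_apply]
  exact sndFDeriv_symm hΦ x _ _

lemma mulVec_hessMat (hΦ : ContDiff ℝ 2 Φ) (x w : Fin n → ℝ) :
    hessMat Φ x *ᵥ w = fderiv ℝ (gradFn Φ) x w := by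
  funext i
  rw [fderiv_gradFn_apply hΦ]
  have : ∀ j, hessMat Φ x i j * w j
      = fderiv ℝ (fderiv ℝ Φ) x ((Pi.single j (w j) : Fin n → ℝ)) (Pi.single i 1) := by
    intro j
    have hsm : (Pi.single j (w j) : Fin n → ℝ) = w j • (Pi.single j 1 : Fin n → ℝ) := by
      funext k; simp [Pi.single_apply]
    rw [hessMat_apply, hsm, _root_.map_smul, sndFDeriv_symm hΦ x]
    simp [mul_comm]
  simp only [Matrix.mulVec, dotProduct, this]
  rw [← ContinuousLinearMap.sum_apply, ← map_sum, Finset.univ_sum_single]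

lemma quadform_hessMat (hΦ : ContDiff ℝ 2 Φ) (x w : Fin n → ℝ) :
    w ⬝ᵥ (hessMat Φ x *ᵥ w) = fderiv ℝ (fderiv ℝ Φ) x w w := by
  rw [mulVec_hessMat hΦ]
  have h1 : ∀ i, w i * fderiv ℝ (gradFn Φ) x w i
      = fderiv ℝ (fderiv ℝ Φ) x w ((Pi.single i (w i) : Fin n → ℝ)) := by
    intro i
    have hsm : (Pi.single i (w i) : Fin n → ℝ) = w i • (Pi.single i 1 : Fin n → ℝ) := by
      funext k; simp [Pi.single_apply]
    rw [fderiv_gradFn_apply hΦ, hsm, _root_.map_smul]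
    simp
  simp only [dotProduct, h1]
  rw [← map_sum, Finset.univ_sum_single]


lemma smul_single_one' (j : Fin n) (a : ℝ) :
    a • (Pi.single j 1 : Fin n → ℝ) = Pi.single j a := by
  funext k; simp [Pi.single_apply]

/-! ### Structure lemmas for solutions -/

section Sol

variable {u : ℝ → (Fin n → ℝ) → (Fin n → ℝ)}

def solSet (n : ℕ) : Set (ℝ × (Fin n → ℝ)) := Set.Ici 0 ×ˢ Set.univ

lemma uniqueDiffOnS : UniqueDiffOn ℝ (Set.Ici (0:ℝ) ×ˢ (Set.univ : Set (Fin n → ℝ))) :=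
  (uniqueDiffOn_Ici 0).prod uniqueDiffOn_univ

variable (hu : ContDiffOn ℝ 1 (fun p : ℝ × (Fin n → ℝ) => u p.1 p.2) (solSet n))

/-- The full space-time derivative of the solution, as `fderivWithin`. -/
noncomputable def solDeriv (u : ℝ → (Fin n → ℝ) → (Fin n → ℝ)) (t : ℝ) (x : Fin n → ℝ) :
    (ℝ × (Fin n → ℝ)) →L[ℝ] (Fin n → ℝ) :=
  fderivWithin ℝ (fun p : ℝ × (Fin n → ℝ) => u p.1 p.2)
    (Set.Ici 0 ×ˢ Set.univ) (t, x)

include hu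

lemma sol_hasFDerivWithinAt {t : ℝ} (ht : 0 ≤ t) (x : Fin n → ℝ) :
    HasFDerivWithinAt (fun p : ℝ × (Fin n → ℝ) => u p.1 p.2) (solDeriv u t x) (solSet n) (t, x) :=
  ((hu.differentiableOn one_ne_zero) (t, x) ⟨ht, trivial⟩).hasFDerivWithinAt

lemma sol_derivWithin_time {t : ℝ} (ht : 0 ≤ t) (x : Fin n → ℝ) (i : Fin n) :
    derivWithin (fun s => u s x i) (Set.Ici 0) t = solDeriv u t x (1, 0) i := by
  have hγ : HasDerivAt (fun s : ℝ => (s, x)) ((1:ℝ), (0 : Fin n → ℝ)) t :=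
    (hasDerivAt_id t).prodMk (hasDerivAt_const t x)
  have hmaps : Set.MapsTo (fun s : ℝ => (s, x)) (Set.Ici 0) (solSet n) :=
    fun s hs => ⟨hs, trivial⟩
  have h1 : HasDerivWithinAt (fun s => u s x) (solDeriv u t x (1, 0)) (Set.Ici 0) t :=
    by have h := (sol_hasFDerivWithinAt hu ht x).comp_hasDerivWithinAt t hγ.hasDerivWithinAt hmaps; exact h
  have h2 : HasDerivWithinAt (fun s => u s x i) (solDeriv u t x (1, 0) i) (Set.Ici 0) t :=
    ((ContinuousLinearMap.proj (R := ℝ) (φ := fun _ : Fin n => ℝ) i).hasFDerivAt).comp_hasDerivWithinAt t h1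
  exact h2.derivWithin (uniqueDiffOn_Ici 0 t ht)

lemma sol_hasFDerivAt_space {t : ℝ} (ht : 0 ≤ t) (x : Fin n → ℝ) :
    HasFDerivAt (fun y => u t y)
      ((solDeriv u t x).comp (ContinuousLinearMap.inr ℝ ℝ (Fin n → ℝ))) x := by
  have hγ : HasFDerivAt (fun y : Fin n → ℝ => ((t : ℝ), y))
      (ContinuousLinearMap.inr ℝ ℝ (Fin n → ℝ)) x :=
    (hasFDerivAt_const t x).prodMk (hasFDerivAt_id x)
  have hmaps : Set.MapsTo (fun y : Fin n → ℝ => ((t : ℝ), y)) Set.univ (solSet n) :=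
    fun y _ => ⟨ht, trivial⟩
  have := (sol_hasFDerivWithinAt hu ht x).comp x hγ.hasFDerivWithinAt hmaps
  rwa [hasFDerivWithinAt_univ] at this

lemma sol_fderiv_space {t : ℝ} (ht : 0 ≤ t) (x v : Fin n → ℝ) (i : Fin n) :
    fderiv ℝ (fun y => u t y i) x v = solDeriv u t x (0, v) i := by
  have h1 : HasFDerivAt (fun y => u t y i)
      ((ContinuousLinearMap.proj (R := ℝ) (φ := fun _ : Fin n => ℝ) i).comp
        ((solDeriv u t x).comp (ContinuousLinearMap.inr ℝ ℝ (Fin n → ℝ)))) x :=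
    ((ContinuousLinearMap.proj (R := ℝ) (φ := fun _ : Fin n => ℝ) i).hasFDerivAt).comp x
      (sol_hasFDerivAt_space hu ht x)
  rw [h1.fderiv]
  rfl

/-- Any C¹ solution is constant along characteristics:
`u (t, y + t φ(y)) = φ(y)` for `t ≥ 0`. -/
lemma char_id {φ : (Fin n → ℝ) → (Fin n → ℝ)}
    (hic : ∀ x, u 0 x = φ x)
    (hpde : ∀ t ∈ Set.Ici (0 : ℝ), ∀ x : Fin n → ℝ, ∀ i : Fin n,
      derivWithin (fun s => u s x i) (Set.Ici 0) t
        + ∑ j : Fin n, u t x j * fderiv ℝ (fun y => u t y i) x (Pi.single j 1) = 0)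
    (y : Fin n → ℝ) {t : ℝ} (ht : 0 ≤ t) :
    u t (y + t • φ y) = φ y := by
  classical
  set c := φ y with hc
  set γ : ℝ → Fin n → ℝ := fun s => y + s • c with hγdef
  set F : ℝ → Fin n → ℝ := fun s => u s (γ s) with hF
  -- derivative of F within Ici 0
  have hγd : ∀ s : ℝ, HasDerivAt (fun s' : ℝ => ((s' : ℝ), γ s')) (1, c) s := by
    intro s
    exact (hasDerivAt_id s).prodMk (((hasDerivAt_id s).smul_const c).const_add y |>.congr_deriv
      (one_smul ℝ c))
  have hmaps : Set.MapsTo (fun s : ℝ => ((s : ℝ), γ s)) (Set.Ici 0) (solSet n) :=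
    fun s hs => ⟨hs, trivial⟩
  have hFd : ∀ s : ℝ, 0 ≤ s →
      HasDerivWithinAt F (solDeriv u s (γ s) (1, c)) (Set.Ici 0) s := by
    intro s hs
    exact (sol_hasFDerivWithinAt hu hs (γ s)).comp_hasDerivWithinAt s
      (hγd s).hasDerivWithinAt hmaps
  -- rewrite the derivative using the PDE
  have hsm : ∀ (a : ℝ) (w : Fin n → ℝ), ((0:ℝ), a • w) = a • ((0:ℝ), w) := by
    intro a w; rw [Prod.smul_mk, smul_zero]
  have hlin : ∀ s, ∀ v : Fin n → ℝ, solDeriv u s (γ s) (0, v)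
      = ∑ j, v j • solDeriv u s (γ s) (0, (Pi.single j 1 : Fin n → ℝ)) := by
    intro s v
    have hv : ((0:ℝ), v) = ∑ j, v j • ((0:ℝ), (Pi.single j 1 : Fin n → ℝ)) := by
      simp_rw [← hsm, smul_single_one']
      rw [Prod.ext_iff]
      constructor
      · rw [Prod.fst_sum]; simp
      · rw [Prod.snd_sum]; simp [Finset.univ_sum_single]
    rw [hv, map_sum]
    simp_rw [_root_.map_smul]
  have hkey : ∀ s : ℝ, 0 ≤ s →
      solDeriv u s (γ s) (1, c) = solDeriv u s (γ s) (0, c - u s (γ s)) := by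
    intro s hs
    funext i
    have hpde' := hpde s hs (γ s) i
    rw [sol_derivWithin_time hu hs (γ s) i] at hpde'
    simp_rw [sol_fderiv_space hu hs (γ s) _ i] at hpde'
    have hsplit : ((1:ℝ), c) = ((1:ℝ), (0 : Fin n → ℝ)) + ((0:ℝ), c) := by simp
    have e1 : solDeriv u s (γ s) (1, c) i
        = solDeriv u s (γ s) (1, 0) i + solDeriv u s (γ s) (0, c) i := by
      rw [hsplit, map_add]; rfl
    rw [e1, hlin s c, hlin s (c - u s (γ s))]
    simp only [Finset.sum_apply, Pi.smul_apply, smul_eq_mul, Pi.sub_apply]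
    have e2 : ∑ j, (c j - u s (γ s) j) * solDeriv u s (γ s) (0, Pi.single j 1) i
        = ∑ j, c j * solDeriv u s (γ s) (0, Pi.single j 1) i
          - ∑ j, u s (γ s) j * solDeriv u s (γ s) (0, Pi.single j 1) i := by
      rw [← Finset.sum_sub_distrib]
      congr 1; funext j; ring
    rw [e2]
    linarith [hpde']
  -- set up Grönwall
  have hmaps' : Set.MapsTo (fun s : ℝ => ((s : ℝ), γ s)) (Set.Icc 0 t) (solSet n) :=
    fun s hs => ⟨hs.1, trivial⟩
  have hγc : Continuous (fun s : ℝ => ((s : ℝ), γ s)) := by fun_prop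
  have hFc : ContinuousOn F (Set.Icc 0 t) :=
    (hu.continuousOn.comp hγc.continuousOn hmaps')
  have hLc : ContinuousOn (fun s => ‖solDeriv u s (γ s)‖) (Set.Icc 0 t) := by
    have h1 : ContinuousOn (fderivWithin ℝ (fun p : ℝ × (Fin n → ℝ) => u p.1 p.2) (solSet n))
        (solSet n) := hu.continuousOn_fderivWithin uniqueDiffOnS le_rfl
    exact (h1.comp hγc.continuousOn hmaps').norm
  obtain ⟨C, hC⟩ := isCompact_Icc.exists_bound_of_continuousOn
    (f := fun s => solDeriv u s (γ s))
    ((hu.continuousOn_fderivWithin uniqueDiffOnS le_rfl).comp hγc.continuousOn hmaps')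
  set M := max C 0 with hM
  have hgr := norm_le_gronwallBound_of_norm_deriv_right_le
    (f := fun s => F s - c) (f' := fun s => solDeriv u s (γ s) (0, c - F s))
    (δ := 0) (K := M) (ε := 0) (a := 0) (b := t)
    (hFc.sub continuousOn_const)
    (fun s hs => (((hFd s hs.1).congr_deriv (hkey s hs.1)).mono
      (Set.Ici_subset_Ici.2 hs.1)).sub_const c)
    (by
      have : F 0 = c := by
        show u 0 (γ 0) = c
        have : γ 0 = y := by simp [hγdef]
        rw [this, hic y]
      simp [this])
    (fun s hs => by
      have h1 : ‖solDeriv u s (γ s) (0, c - F s)‖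
          ≤ ‖solDeriv u s (γ s)‖ * ‖((0:ℝ), c - F s)‖ :=
        ContinuousLinearMap.le_opNorm _ _
      have h2 : ‖((0:ℝ), c - F s)‖ = ‖F s - c‖ := by
        rw [Prod.norm_def]
        simp [norm_sub_rev (F s) c]
      have h3 : ‖solDeriv u s (γ s)‖ ≤ M := le_trans (hC s ⟨hs.1, le_of_lt hs.2⟩) (le_max_left _ _)
      calc ‖solDeriv u s (γ s) (0, c - F s)‖ ≤ ‖solDeriv u s (γ s)‖ * ‖F s - c‖ := by
            rw [← h2]; exact h1
        _ ≤ M * ‖F s - c‖ := by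
            apply mul_le_mul_of_nonneg_right h3 (norm_nonneg _)
        _ = M * ‖F s - c‖ + 0 := by ring)
  have hFt := hgr t ⟨ht, le_rfl⟩
  rw [gronwallBound_ε0_δ0] at hFt
  have : F t - c = 0 := by
    rwa [norm_le_zero_iff] at hFt
  have hFtc : F t = c := by rwa [sub_eq_zero] at this
  exact hFtc

/-- Forward direction: existence of a global C¹ solution forces the Hessian to be PSD. -/
lemma posSemidef_of_sol (hΦ : ContDiff ℝ 2 Φ)
    (hic : ∀ x, u 0 x = gradFn Φ x)
    (hpde : ∀ t ∈ Set.Ici (0 : ℝ), ∀ x : Fin n → ℝ, ∀ i : Fin n,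
      derivWithin (fun s => u s x i) (Set.Ici 0) t
        + ∑ j : Fin n, u t x j * fderiv ℝ (fun y => u t y i) x (Pi.single j 1) = 0)
    (x : Fin n → ℝ) : (hessMat Φ x).PosSemidef := by
  classical
  have hH := isHermitian_hessMat hΦ x
  refine hH.posSemidef_iff_eigenvalues_nonneg.mpr fun i => ?_
  show 0 ≤ hH.eigenvalues i
  by_contra hneg
  push_neg at hneg
  set μ := hH.eigenvalues i with hμ
  set w : Fin n → ℝ := ⇑(hH.eigenvectorBasis i) with hw
  have hwne : w ≠ 0 := by
    intro h
    exact hH.eigenvectorBasis.orthonormal.ne_zero i (by ext k; exact congrFun h k)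
  have hmul : hessMat Φ x *ᵥ w = μ • w := hH.mulVec_eigenvectorBasis i
  set t₀ : ℝ := -1 / μ with ht₀def
  have hμne : μ ≠ 0 := ne_of_lt hneg
  have ht₀ : 0 < t₀ := by
    rw [ht₀def]
    exact div_pos_of_neg_of_neg (by norm_num) hneg
  have hg : ContDiff ℝ 1 (gradFn Φ) := contDiff_gradFn hΦ
  set Dg := fderiv ℝ (gradFn Φ) x with hDg
  have hgd : HasFDerivAt (gradFn Φ) Dg x := (hg.differentiable one_ne_zero x).hasFDerivAt
  set Y : (Fin n → ℝ) → (Fin n → ℝ) := fun y => y + t₀ • gradFn Φ y with hY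
  set A := ContinuousLinearMap.id ℝ (Fin n → ℝ) + t₀ • Dg with hA
  have hYd : HasFDerivAt Y A x := by
    rw [hA]
    exact (hasFDerivAt_id x).add (hgd.const_smul t₀)
  set B := (solDeriv u t₀ (Y x)).comp (ContinuousLinearMap.inr ℝ ℝ (Fin n → ℝ)) with hBdef
  have hB : HasFDerivAt (fun y => u t₀ y) B (Y x) :=
    sol_hasFDerivAt_space hu (le_of_lt ht₀) (Y x)
  have hcomp : HasFDerivAt (fun y => u t₀ (Y y)) (B.comp A) x := hB.comp x hYd
  have heq : (fun y => u t₀ (Y y)) = gradFn Φ :=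
    funext fun y => char_id hu hic hpde y (le_of_lt ht₀)
  rw [heq] at hcomp
  have huniq : Dg = B.comp A := hgd.unique hcomp
  have h1 : Dg w = μ • w := by
    rw [hDg, ← mulVec_hessMat hΦ x w, hmul]
  have h2 : A w = 0 := by
    rw [hA]
    simp only [ContinuousLinearMap.add_apply, ContinuousLinearMap.id_apply,
      ContinuousLinearMap.smul_apply, h1]
    rw [smul_smul, ht₀def]
    have : -1 / μ * μ = -1 := by field_simp
    rw [this]
    simp
  have h3 : Dg w = B (A w) := by rw [huniq]; rfl
  rw [h2, map_zero, h1] at h3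
  rcases smul_eq_zero.1 h3 with h | h
  · exact hμne h
  · exact hwne h

end Sol

/-! ### Backward direction: construction of the solution -/

section Backward

/-- A convenient inner product on the plain pi type. -/
def ip (a b : Fin n → ℝ) : ℝ := ∑ i, a i * b i

lemma ip_nonneg_self (a : Fin n → ℝ) : 0 ≤ ip a a :=
  Finset.sum_nonneg fun i _ => mul_self_nonneg _

lemma ip_le (a b : Fin n → ℝ) : ip a b ≤ n * ‖a‖ * ‖b‖ := by
  calc ip a b ≤ ∑ _i : Fin n, ‖a‖ * ‖b‖ := by
        apply Finset.sum_le_sum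
        intro i _
        calc a i * b i ≤ |a i * b i| := le_abs_self _
          _ = |a i| * |b i| := abs_mul _ _
          _ ≤ ‖a‖ * ‖b‖ := by
              apply mul_le_mul ?_ ?_ (abs_nonneg _) (norm_nonneg _)
              · exact (norm_le_pi_norm a i)
              · exact (norm_le_pi_norm b i)
    _ = n * ‖a‖ * ‖b‖ := by simp [mul_assoc]

lemma sq_norm_le_ip (a : Fin n → ℝ) : ‖a‖ ^ 2 ≤ ip a a := by
  have h1 : ‖a‖ ≤ Real.sqrt (ip a a) := by
    apply pi_norm_le_iff_of_nonneg (Real.sqrt_nonneg _) |>.2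
    intro i
    have : a i ^ 2 ≤ ip a a := by
      have := Finset.single_le_sum (f := fun j => a j * a j)
        (fun j _ => mul_self_nonneg _) (Finset.mem_univ i)
      simpa [ip, pow_two] using this
    calc ‖a i‖ = Real.sqrt (a i ^ 2) := by
          rw [Real.sqrt_sq_eq_abs]; rfl
      _ ≤ Real.sqrt (ip a a) := Real.sqrt_le_sqrt this
  calc ‖a‖ ^ 2 ≤ Real.sqrt (ip a a) ^ 2 := by
        apply pow_le_pow_left₀ (norm_nonneg _) h1
    _ = ip a a := Real.sq_sqrt (ip_nonneg_self a)

variable {K : ℝ} (hΦ : ContDiff ℝ 2 Φ)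
  (hK : ∀ x, ‖iteratedFDeriv ℝ 1 (gradFn Φ) x‖ ≤ K)
  (hPSD : ∀ x, (hessMat Φ x).PosSemidef)

include hK in
lemma norm_fderiv_grad_le (x : Fin n → ℝ) : ‖fderiv ℝ (gradFn Φ) x‖ ≤ K := by
  apply ContinuousLinearMap.opNorm_le_bound _ (le_trans (norm_nonneg _) (hK x))
  intro v
  have h1 : fderiv ℝ (gradFn Φ) x v = iteratedFDeriv ℝ 1 (gradFn Φ) x ![v] := by
    rw [iteratedFDeriv_one_apply]
    rfl
  rw [h1]
  calc ‖iteratedFDeriv ℝ 1 (gradFn Φ) x ![v]‖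
      ≤ ‖iteratedFDeriv ℝ 1 (gradFn Φ) x‖ * ∏ i : Fin 1, ‖(![v] : Fin 1 → Fin n → ℝ) i‖ :=
        ContinuousMultilinearMap.le_opNorm _ _
    _ = ‖iteratedFDeriv ℝ 1 (gradFn Φ) x‖ * ‖v‖ := by simp
    _ ≤ K * ‖v‖ := by
        apply mul_le_mul_of_nonneg_right (hK x) (norm_nonneg _)

include hΦ hK in
lemma norm_grad_sub_le (a b : Fin n → ℝ) : ‖gradFn Φ a - gradFn Φ b‖ ≤ K * ‖a - b‖ := by
  have hd : Differentiable ℝ (gradFn Φ) := (contDiff_gradFn hΦ).differentiable one_ne_zero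
  have := Convex.norm_image_sub_le_of_norm_fderiv_le
    (fun x _ => (hd x)) (fun x _ => norm_fderiv_grad_le hK x) convex_univ
    (Set.mem_univ b) (Set.mem_univ a)
  simpa using this

include hΦ hPSD in
lemma grad_mono (a b : Fin n → ℝ) : 0 ≤ ip (gradFn Φ a - gradFn Φ b) (a - b) := by
  classical
  set d : Fin n → ℝ := a - b with hd
  set ψ : ℝ → ℝ := fun s => ip (gradFn Φ (b + s • d)) d with hψ
  have hdiff : ∀ s : ℝ, HasDerivAt ψ
      (ip (fderiv ℝ (gradFn Φ) (b + s • d) d) d) s := by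
    intro s
    have hline : HasDerivAt (fun s : ℝ => b + s • d) d s := by
      simpa using (((hasDerivAt_id s).smul_const d).const_add b).congr_deriv (one_smul ℝ d)
    have hgd : HasFDerivAt (gradFn Φ) (fderiv ℝ (gradFn Φ) (b + s • d)) (b + s • d) :=
      (((contDiff_gradFn hΦ).differentiable one_ne_zero) _).hasFDerivAt
    have hcomp : HasDerivAt (fun s : ℝ => gradFn Φ (b + s • d))
        (fderiv ℝ (gradFn Φ) (b + s • d) d) s := by have h := hgd.comp_hasDerivAt s hline; exact h
    have : HasDerivAt (fun s : ℝ => ∑ i, gradFn Φ (b + s • d) i * d i)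
        (∑ i, fderiv ℝ (gradFn Φ) (b + s • d) d i * d i) s := by
      apply HasDerivAt.fun_sum
      intro i _
      have hcoord : HasDerivAt (fun s : ℝ => gradFn Φ (b + s • d) i)
          (fderiv ℝ (gradFn Φ) (b + s • d) d i) s := by
        have := ((ContinuousLinearMap.proj (R := ℝ) (φ := fun _ : Fin n => ℝ)
          i).hasFDerivAt).comp_hasDerivAt s hcomp
        exact this
      exact hcoord.mul_const (d i)
    exact this
  have hnn : ∀ s : ℝ, 0 ≤ ip (fderiv ℝ (gradFn Φ) (b + s • d) d) d := by
    intro s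
    have hq := (hPSD (b + s • d)).dotProduct_mulVec_nonneg d
    rw [show star d = d from rfl] at hq
    have : (d ⬝ᵥ (hessMat Φ (b + s • d) *ᵥ d)) = ip (fderiv ℝ (gradFn Φ) (b + s • d) d) d := by
      rw [mulVec_hessMat hΦ]
      simp [ip, dotProduct, mul_comm]
    rw [this] at hq
    exact hq
  have hmono : Monotone ψ := by
    apply monotone_of_deriv_nonneg
    · exact fun s => (hdiff s).differentiableAt
    · intro s
      rw [(hdiff s).deriv]
      exact hnn s
  have h01 := hmono (le_of_lt one_pos : (0:ℝ) ≤ 1)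
  have hψ0 : ψ 0 = ip (gradFn Φ b) d := by simp [hψ]
  have hψ1 : ψ 1 = ip (gradFn Φ a) d := by
    have h : b + (1:ℝ) • d = a := by simp [hd]
    rw [hψ]
    simp only [h]
  have : ip (gradFn Φ a - gradFn Φ b) d
      = ip (gradFn Φ a) d - ip (gradFn Φ b) d := by
    simp [ip, sub_mul, Finset.sum_sub_distrib]
  rw [hd] at this ⊢
  rw [this]
  rw [hψ0, hψ1] at h01
  linarith

/-! ### The characteristic flow map -/

noncomputable def Ymap (Φ : (Fin n → ℝ) → ℝ) (t : ℝ) (y : Fin n → ℝ) : Fin n → ℝ := y + t • gradFn Φ y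

/-- Threshold so that `Ymap` stays invertible slightly past `t = 0`. -/
noncomputable def δc (n : ℕ) (K : ℝ) : ℝ := 1 / (2 * (n * K + 1))

include hK in
lemma K_nonneg : 0 ≤ K := le_trans (norm_nonneg _) (hK 0)

include hK in
lemma δc_pos : 0 < δc n K := by
  have := K_nonneg hK
  have hn : (0:ℝ) ≤ n := Nat.cast_nonneg n
  apply div_pos one_pos
  nlinarith

lemma ip_bilin (d v : Fin n → ℝ) (t : ℝ) : ip (d + t • v) d = ip d d + t * ip v d := by
  simp only [ip, Pi.add_apply, Pi.smul_apply, smul_eq_mul, Finset.mul_sum]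
  rw [← Finset.sum_add_distrib]
  apply Finset.sum_congr rfl
  intro i _
  ring

include hΦ hK hPSD in
lemma ip_Ymap_ge {t : ℝ} (ht : -δc n K < t) (a b : Fin n → ℝ) :
    ip (a - b) (a - b) ≤ 2 * ip (Ymap Φ t a - Ymap Φ t b) (a - b) := by
  have hK0 := K_nonneg hK
  have hδ := δc_pos hK
  set d : Fin n → ℝ := a - b with hd
  set v : Fin n → ℝ := gradFn Φ a - gradFn Φ b with hv
  have hYd : Ymap Φ t a - Ymap Φ t b = d + t • v := by
    simp only [Ymap, hv, hd, smul_sub]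
    abel
  rw [hYd, ip_bilin]
  have hP0 : 0 ≤ ip v d := grad_mono hΦ hPSD a b
  have hip0 : 0 ≤ ip d d := ip_nonneg_self d
  have hP1 : ip v d ≤ (n * K) * ip d d := by
    calc ip v d ≤ n * ‖v‖ * ‖d‖ := ip_le v d
      _ ≤ n * (K * ‖d‖) * ‖d‖ := by
          apply mul_le_mul_of_nonneg_right _ (norm_nonneg _)
          apply mul_le_mul_of_nonneg_left (norm_grad_sub_le hΦ hK a b) (Nat.cast_nonneg n)
      _ = (n * K) * ‖d‖ ^ 2 := by ring
      _ ≤ (n * K) * ip d d := by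
          apply mul_le_mul_of_nonneg_left (sq_norm_le_ip d) (by positivity)
  rcases le_or_gt 0 t with h0 | h0
  · nlinarith
  · have h1 : -t * ip v d ≤ δc n K * ((n * K) * ip d d) := by
      apply mul_le_mul (by linarith) hP1 hP0 (le_of_lt hδ)
    have h2 : δc n K * (n * K) ≤ 1 / 2 := by
      rw [δc]
      rw [div_mul_eq_mul_div, one_mul, div_le_div_iff₀ (by nlinarith) (by norm_num)]
      nlinarith
    have h3 : δc n K * ((n * K) * ip d d) ≤ (1/2) * ip d d := by
      rw [← mul_assoc]
      apply mul_le_mul_of_nonneg_right h2 hip0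
    nlinarith

include hΦ hK hPSD in
lemma norm_Ymap_ge {t : ℝ} (ht : -δc n K < t) (a b : Fin n → ℝ) :
    ‖a - b‖ ≤ (2 * n + 2) * ‖Ymap Φ t a - Ymap Φ t b‖ := by
  have h1 := ip_Ymap_ge hΦ hK hPSD ht a b
  have h2 := sq_norm_le_ip (a - b)
  have h3 := ip_le (Ymap Φ t a - Ymap Φ t b) (a - b)
  have h4 : (0:ℝ) ≤ ‖a - b‖ := norm_nonneg _
  have h5 : (0:ℝ) ≤ ‖Ymap Φ t a - Ymap Φ t b‖ := norm_nonneg _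
  have hn : (0:ℝ) ≤ n := Nat.cast_nonneg n
  rcases eq_or_lt_of_le h4 with h6 | h6
  · rw [← h6]; positivity
  · nlinarith

include hΦ hPSD hK in
lemma ip_fderiv_nonneg (y v : Fin n → ℝ) : 0 ≤ ip (fderiv ℝ (gradFn Φ) y v) v := by
  have hq := (hPSD y).dotProduct_mulVec_nonneg v
  rw [show star v = v from rfl] at hq
  have : (v ⬝ᵥ (hessMat Φ y *ᵥ v)) = ip (fderiv ℝ (gradFn Φ) y v) v := by
    rw [mulVec_hessMat hΦ]
    simp [ip, dotProduct, mul_comm]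
  rw [this] at hq
  exact hq

include hΦ hK hPSD in
lemma ip_deriv_ge {t : ℝ} (ht : -δc n K < t) (y v : Fin n → ℝ) :
    ip v v ≤ 2 * ip (v + t • fderiv ℝ (gradFn Φ) y v) v := by
  have hK0 := K_nonneg hK
  have hδ := δc_pos hK
  rw [ip_bilin]
  have hP0 : 0 ≤ ip (fderiv ℝ (gradFn Φ) y v) v := ip_fderiv_nonneg hΦ hK hPSD y v
  have hip0 : 0 ≤ ip v v := ip_nonneg_self v
  have hP1 : ip (fderiv ℝ (gradFn Φ) y v) v ≤ (n * K) * ip v v := by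
    calc ip (fderiv ℝ (gradFn Φ) y v) v ≤ n * ‖fderiv ℝ (gradFn Φ) y v‖ * ‖v‖ := ip_le _ _
      _ ≤ n * (K * ‖v‖) * ‖v‖ := by
          apply mul_le_mul_of_nonneg_right _ (norm_nonneg _)
          apply mul_le_mul_of_nonneg_left _ (Nat.cast_nonneg n)
          calc ‖fderiv ℝ (gradFn Φ) y v‖ ≤ ‖fderiv ℝ (gradFn Φ) y‖ * ‖v‖ :=
                ContinuousLinearMap.le_opNorm _ _
            _ ≤ K * ‖v‖ := mul_le_mul_of_nonneg_right (norm_fderiv_grad_le hK y) (norm_nonneg _)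
      _ = (n * K) * ‖v‖ ^ 2 := by ring
      _ ≤ (n * K) * ip v v := by
          apply mul_le_mul_of_nonneg_left (sq_norm_le_ip v) (by positivity)
  rcases le_or_gt 0 t with h0 | h0
  · nlinarith
  · have h1 : -t * ip (fderiv ℝ (gradFn Φ) y v) v ≤ δc n K * ((n * K) * ip v v) := by
      apply mul_le_mul (by linarith) hP1 hP0 (le_of_lt hδ)
    have h2 : δc n K * (n * K) ≤ 1 / 2 := by
      rw [δc]
      rw [div_mul_eq_mul_div, one_mul, div_le_div_iff₀ (by nlinarith) (by norm_num)]
      nlinarith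
    have h3 : δc n K * ((n * K) * ip v v) ≤ (1/2) * ip v v := by
      rw [← mul_assoc]
      apply mul_le_mul_of_nonneg_right h2 hip0
    nlinarith

/-! ### Invertibility of the flow map -/

noncomputable def Aclm (Φ : (Fin n → ℝ) → ℝ) (t : ℝ) (y : Fin n → ℝ) :
    (Fin n → ℝ) →L[ℝ] (Fin n → ℝ) :=
  ContinuousLinearMap.id ℝ (Fin n → ℝ) + t • fderiv ℝ (gradFn Φ) y

lemma Aclm_apply (t : ℝ) (y v : Fin n → ℝ) :
    Aclm Φ t y v = v + t • fderiv ℝ (gradFn Φ) y v := rfl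

include hΦ hK hPSD in
lemma Aclm_inj {t : ℝ} (ht : -δc n K < t) (y : Fin n → ℝ) :
    Function.Injective (Aclm Φ t y) := by
  intro a b hab
  have h0 : Aclm Φ t y (a - b) = 0 := by rw [map_sub, hab, sub_self]
  have h1 := ip_deriv_ge hΦ hK hPSD ht y (a - b)
  rw [← Aclm_apply, h0] at h1
  have h2 : ip (0 : Fin n → ℝ) (a - b) = 0 := by simp [ip]
  rw [h2] at h1
  have h3 := sq_norm_le_ip (a - b)
  have h4 : ‖a - b‖ = 0 := by nlinarith [norm_nonneg (a - b)]
  rw [norm_eq_zero, sub_eq_zero] at h4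
  exact h4

noncomputable def Aeq {t : ℝ} (ht : -δc n K < t) (y : Fin n → ℝ)
    (hΦ : ContDiff ℝ 2 Φ) (hK : ∀ x, ‖iteratedFDeriv ℝ 1 (gradFn Φ) x‖ ≤ K)
    (hPSD : ∀ x, (hessMat Φ x).PosSemidef) : (Fin n → ℝ) ≃L[ℝ] (Fin n → ℝ) :=
  ((Aclm Φ t y).toLinearMap.linearEquivOfInjective
    (Aclm_inj hΦ hK hPSD ht y) rfl).toContinuousLinearEquiv

lemma Aeq_apply {t : ℝ} (ht : -δc n K < t) (y v : Fin n → ℝ) :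
    Aeq ht y hΦ hK hPSD v = Aclm Φ t y v := rfl

include hΦ in
lemma Ymap_hasStrictFDerivAt (t : ℝ) (y : Fin n → ℝ) :
    HasStrictFDerivAt (Ymap Φ t) (Aclm Φ t y) y := by
  have hg : HasStrictFDerivAt (gradFn Φ) (fderiv ℝ (gradFn Φ) y) y :=
    ((contDiff_gradFn hΦ).contDiffAt).hasStrictFDerivAt one_ne_zero
  exact (hasStrictFDerivAt_id y).add (hg.const_smul t)

include hΦ hK in
lemma Ymap_lipschitz (t : ℝ) (a b : Fin n → ℝ) :
    ‖Ymap Φ t a - Ymap Φ t b‖ ≤ (1 + |t| * K) * ‖a - b‖ := by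
  have h1 : Ymap Φ t a - Ymap Φ t b = (a - b) + t • (gradFn Φ a - gradFn Φ b) := by
    simp only [Ymap, smul_sub]; abel
  rw [h1]
  calc ‖(a - b) + t • (gradFn Φ a - gradFn Φ b)‖
      ≤ ‖a - b‖ + ‖t • (gradFn Φ a - gradFn Φ b)‖ := norm_add_le _ _
    _ = ‖a - b‖ + |t| * ‖gradFn Φ a - gradFn Φ b‖ := by rw [norm_smul]; rfl
    _ ≤ ‖a - b‖ + |t| * (K * ‖a - b‖) := by
        have := norm_grad_sub_le hΦ hK a b
        have h2 : |t| * ‖gradFn Φ a - gradFn Φ b‖ ≤ |t| * (K * ‖a - b‖) :=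
          mul_le_mul_of_nonneg_left this (abs_nonneg t)
        linarith
    _ = (1 + |t| * K) * ‖a - b‖ := by ring

include hΦ hK hPSD in
lemma Ymap_surjective {t : ℝ} (ht : -δc n K < t) :
    Function.Surjective (Ymap Φ t) := by
  have hK0 := K_nonneg hK
  set R : Set (Fin n → ℝ) := Set.range (Ymap Φ t) with hR
  have hanti : AntilipschitzWith (2 * n + 2 : ℝ≥0) (Ymap Φ t) := by
    apply AntilipschitzWith.of_le_mul_dist
    intro a b
    rw [dist_eq_norm, dist_eq_norm]
    have := norm_Ymap_ge hΦ hK hPSD ht a b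
    calc ‖a - b‖ ≤ (2 * n + 2) * ‖Ymap Φ t a - Ymap Φ t b‖ := this
      _ = ((2 * n + 2 : ℝ≥0) : ℝ) * ‖Ymap Φ t a - Ymap Φ t b‖ := by push_cast; ring_nf
  have hunif : UniformContinuous (Ymap Φ t) := by
    apply LipschitzWith.uniformContinuous (K := (1 + |t| * K).toNNReal)
    apply LipschitzWith.of_dist_le_mul
    intro a b
    rw [dist_eq_norm, dist_eq_norm, Real.coe_toNNReal _ (by positivity)]
    exact Ymap_lipschitz hΦ hK t a b
  have hclosed : IsClosed R := hanti.isClosed_range hunif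
  have hopen : IsOpen R := by
    rw [isOpen_iff_mem_nhds]
    rintro x ⟨y, rfl⟩
    have hs : HasStrictFDerivAt (Ymap Φ t) ((Aeq ht y hΦ hK hPSD : (Fin n → ℝ) →L[ℝ] _)) y :=
      Ymap_hasStrictFDerivAt hΦ t y
    have := hs.map_nhds_eq_of_equiv
    rw [← this]
    have himg : Ymap Φ t '' Set.univ ∈ Filter.map (Ymap Φ t) (nhds y) :=
      Filter.image_mem_map Filter.univ_mem
    rw [Set.image_univ] at himg
    exact himg
  have : R = Set.univ := IsClopen.eq_univ ⟨hclosed, hopen⟩ ⟨Ymap Φ t 0, ⟨0, rfl⟩⟩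
  intro x
  have : x ∈ R := by rw [this]; trivial
  exact this

/-! ### The space-time flow map and its inverse -/

noncomputable def Tprod (Φ : (Fin n → ℝ) → ℝ) : ℝ × (Fin n → ℝ) → ℝ × (Fin n → ℝ) :=
  fun p => (p.1, Ymap Φ p.1 p.2)

noncomputable def Ginv (Φ : (Fin n → ℝ) → ℝ) : ℝ × (Fin n → ℝ) → (Fin n → ℝ) :=
  fun p => Function.invFun (Ymap Φ p.1) p.2

include hΦ hK hPSD in
lemma Ymap_inj {t : ℝ} (ht : -δc n K < t) : Function.Injective (Ymap Φ t) := by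
  intro a b hab
  have h := norm_Ymap_ge hΦ hK hPSD ht a b
  rw [hab, sub_self, norm_zero, mul_zero] at h
  have : ‖a - b‖ = 0 := le_antisymm h (norm_nonneg _)
  rwa [norm_eq_zero, sub_eq_zero] at this

include hΦ hK hPSD in
lemma Ymap_Ginv {t : ℝ} (ht : -δc n K < t) (x : Fin n → ℝ) :
    Ymap Φ t (Ginv Φ (t, x)) = x :=
  Function.invFun_eq (Ymap_surjective hΦ hK hPSD ht x)

include hΦ hK hPSD in
lemma Ginv_Ymap {t : ℝ} (ht : -δc n K < t) (y : Fin n → ℝ) :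
    Ginv Φ (t, Ymap Φ t y) = y := by
  apply Ymap_inj hΦ hK hPSD ht
  exact Ymap_Ginv hΦ hK hPSD ht (Ymap Φ t y)

noncomputable def DT (Φ : (Fin n → ℝ) → ℝ) (t : ℝ) (y : Fin n → ℝ) :
    (ℝ × (Fin n → ℝ)) →L[ℝ] (ℝ × (Fin n → ℝ)) :=
  (ContinuousLinearMap.fst ℝ ℝ (Fin n → ℝ)).prod
    ((ContinuousLinearMap.snd ℝ ℝ (Fin n → ℝ))
      + (t • ((fderiv ℝ (gradFn Φ) y).comp (ContinuousLinearMap.snd ℝ ℝ (Fin n → ℝ)))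
        + (ContinuousLinearMap.fst ℝ ℝ (Fin n → ℝ)).smulRight (gradFn Φ y)))

lemma DT_apply (t : ℝ) (y : Fin n → ℝ) (p : ℝ × (Fin n → ℝ)) :
    DT Φ t y p = (p.1, Aclm Φ t y p.2 + p.1 • gradFn Φ y) := by
  simp only [DT, Aclm, ContinuousLinearMap.prod_apply, ContinuousLinearMap.add_apply,
    ContinuousLinearMap.coe_fst', ContinuousLinearMap.coe_snd',
    ContinuousLinearMap.smul_apply, ContinuousLinearMap.coe_comp', Function.comp_apply,
    ContinuousLinearMap.smulRight_apply, ContinuousLinearMap.id_apply]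
  rw [add_assoc]

noncomputable def DTinv {t : ℝ} (ht : -δc n K < t) (y : Fin n → ℝ)
    (hΦ : ContDiff ℝ 2 Φ) (hK : ∀ x, ‖iteratedFDeriv ℝ 1 (gradFn Φ) x‖ ≤ K)
    (hPSD : ∀ x, (hessMat Φ x).PosSemidef) :
    (ℝ × (Fin n → ℝ)) →L[ℝ] (ℝ × (Fin n → ℝ)) :=
  (ContinuousLinearMap.fst ℝ ℝ (Fin n → ℝ)).prod
    (((Aeq ht y hΦ hK hPSD).symm : (Fin n → ℝ) →L[ℝ] (Fin n → ℝ)).comp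
      ((ContinuousLinearMap.snd ℝ ℝ (Fin n → ℝ))
        - (ContinuousLinearMap.fst ℝ ℝ (Fin n → ℝ)).smulRight (gradFn Φ y)))

noncomputable def DTeq {t : ℝ} (ht : -δc n K < t) (y : Fin n → ℝ)
    (hΦ : ContDiff ℝ 2 Φ) (hK : ∀ x, ‖iteratedFDeriv ℝ 1 (gradFn Φ) x‖ ≤ K)
    (hPSD : ∀ x, (hessMat Φ x).PosSemidef) :
    (ℝ × (Fin n → ℝ)) ≃L[ℝ] (ℝ × (Fin n → ℝ)) := by
  apply ContinuousLinearEquiv.equivOfInverse (DT Φ t y) (DTinv ht y hΦ hK hPSD)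
  · intro p
    rw [DT_apply]
    simp only [DTinv, ContinuousLinearMap.prod_apply, ContinuousLinearMap.coe_fst',
      ContinuousLinearMap.coe_comp', Function.comp_apply, ContinuousLinearMap.sub_apply,
      ContinuousLinearMap.coe_snd', ContinuousLinearMap.smulRight_apply]
    have h1 : Aclm Φ t y p.2 + p.1 • gradFn Φ y - p.1 • gradFn Φ y = Aclm Φ t y p.2 := by
      abel
    rw [h1, ← Aeq_apply hΦ hK hPSD ht]
    refine Prod.ext rfl ?_
    simp
  · intro p
    rw [DT_apply]
    simp only [DTinv, ContinuousLinearMap.prod_apply, ContinuousLinearMap.coe_fst',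
      ContinuousLinearMap.coe_comp', Function.comp_apply, ContinuousLinearMap.sub_apply,
      ContinuousLinearMap.coe_snd', ContinuousLinearMap.smulRight_apply]
    refine Prod.ext rfl ?_
    rw [← Aeq_apply hΦ hK hPSD ht]
    simp

lemma DTeq_coe {t : ℝ} (ht : -δc n K < t) (y : Fin n → ℝ)
    (hΦ : ContDiff ℝ 2 Φ) (hK : ∀ x, ‖iteratedFDeriv ℝ 1 (gradFn Φ) x‖ ≤ K)
    (hPSD : ∀ x, (hessMat Φ x).PosSemidef) :
    (DTeq ht y hΦ hK hPSD : (ℝ × (Fin n → ℝ)) →L[ℝ] (ℝ × (Fin n → ℝ))) = DT Φ t y := rfl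

include hΦ in
lemma Tprod_contDiff : ContDiff ℝ 1 (Tprod Φ) := by
  apply ContDiff.prodMk contDiff_fst
  exact contDiff_snd.add (contDiff_fst.smul ((contDiff_gradFn hΦ).comp contDiff_snd))

include hΦ in
lemma Tprod_hasStrictFDerivAt (t : ℝ) (y : Fin n → ℝ) :
    HasStrictFDerivAt (Tprod Φ) (DT Φ t y) (t, y) := by
  apply HasStrictFDerivAt.prodMk
  · exact hasStrictFDerivAt_fst
  · apply HasStrictFDerivAt.add
    · exact hasStrictFDerivAt_snd
    · have hg : HasStrictFDerivAt (gradFn Φ) (fderiv ℝ (gradFn Φ) y) y :=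
        ((contDiff_gradFn hΦ).contDiffAt).hasStrictFDerivAt one_ne_zero
      have hsnd : HasStrictFDerivAt (fun p : ℝ × (Fin n → ℝ) => gradFn Φ p.2)
          ((fderiv ℝ (gradFn Φ) y).comp (ContinuousLinearMap.snd ℝ ℝ (Fin n → ℝ))) (t, y) :=
        hg.comp (t, y) hasStrictFDerivAt_snd
      exact hasStrictFDerivAt_fst.smul hsnd

/-- The candidate solution, as a function of space-time. -/
noncomputable def usol2 (Φ : (Fin n → ℝ) → ℝ) : ℝ × (Fin n → ℝ) → (Fin n → ℝ) :=
  fun p => gradFn Φ (Ginv Φ p)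

include hΦ hK hPSD in
lemma Tinv_contDiffAt {p : ℝ × (Fin n → ℝ)} (hp : -δc n K < p.1) :
    ContDiffAt ℝ 1 (fun q : ℝ × (Fin n → ℝ) => (q.1, Ginv Φ q)) p := by
  set y := Ginv Φ p with hy
  set pt : ℝ × (Fin n → ℝ) := (p.1, y) with hpt
  have hTpt : Tprod Φ pt = p := by
    show (p.1, Ymap Φ p.1 y) = p
    refine Prod.ext rfl ?_
    show Ymap Φ p.1 (Ginv Φ p) = p.2
    have : Ginv Φ p = Ginv Φ (p.1, p.2) := rfl
    rw [this]
    exact Ymap_Ginv hΦ hK hPSD hp p.2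
  have hT : ContDiffAt ℝ (1:ℕ∞) (Tprod Φ) pt := (Tprod_contDiff hΦ).contDiffAt
  have hf' : HasFDerivAt (Tprod Φ)
      ((DTeq hp y hΦ hK hPSD : (ℝ × (Fin n → ℝ)) →L[ℝ] (ℝ × (Fin n → ℝ)))) pt := by
    rw [DTeq_coe]
    exact (Tprod_hasStrictFDerivAt hΦ p.1 y).hasFDerivAt
  have hli := hT.to_localInverse (f' := DTeq hp y hΦ hK hPSD) hf' one_ne_zero
  rw [hTpt] at hli
  apply hli.congr_of_eventuallyEq
  set li := hT.localInverse hf' one_ne_zero with hli_def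
  have hstrict := hT.hasStrictFDerivAt' hf' one_ne_zero
  have h1 : ∀ᶠ q in nhds p, Tprod Φ (li q) = q := by
    have := hstrict.eventually_right_inverse
    rwa [hTpt] at this
  have hcont : ContinuousAt li p := by
    have := hstrict.localInverse_continuousAt
    rwa [hTpt] at this
  have hlip : li p = pt := by
    have := hT.localInverse_apply_image hf' one_ne_zero
    rwa [hTpt] at this
  have hev : ∀ᶠ z in nhds pt, -δc n K < z.1 := by
    apply (isOpen_lt continuous_const continuous_fst).mem_nhds
    exact hp
  have h2 : ∀ᶠ q in nhds p, -δc n K < (li q).1 := by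
    have := Filter.Tendsto.eventually (p := fun z : ℝ × (Fin n → ℝ) => -δc n K < z.1)
      hcont (by rw [hlip]; exact hev)
    exact this
  filter_upwards [h1, h2] with q hq1 hq2
  have hq1' : ((li q).1, Ymap Φ (li q).1 (li q).2) = (q.1, q.2) := hq1
  rw [Prod.mk.injEq] at hq1'
  obtain ⟨hfst, hsnd⟩ := hq1'
  rw [hfst] at hsnd hq2
  have hG : Ginv Φ q = (li q).2 := by
    apply Ymap_inj hΦ hK hPSD hq2
    have : Ginv Φ q = Ginv Φ (q.1, q.2) := rfl
    rw [this, Ymap_Ginv hΦ hK hPSD hq2 q.2, hsnd]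
  rw [hG]
  exact Prod.ext hfst.symm rfl

include hΦ hK hPSD in
lemma usol2_contDiffAt {p : ℝ × (Fin n → ℝ)} (hp : -δc n K < p.1) :
    ContDiffAt ℝ 1 (usol2 Φ) p := by
  have h1 : ContDiffAt ℝ 1 (fun q : ℝ × (Fin n → ℝ) => (q.1, Ginv Φ q)) p :=
    Tinv_contDiffAt hΦ hK hPSD hp
  have h2 : ContDiffAt ℝ 1 (gradFn Φ) (Ginv Φ p) := (contDiff_gradFn hΦ).contDiffAt
  have h3 : ContDiffAt ℝ 1 (fun q : ℝ × (Fin n → ℝ) => Ginv Φ q) p := by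
    have := contDiffAt_snd.comp p h1
    exact this
  exact h2.comp p h3

lemma clm_split (L : (ℝ × (Fin n → ℝ)) →L[ℝ] (Fin n → ℝ)) (v : Fin n → ℝ) :
    L (0, v) = ∑ j, v j • L (0, (Pi.single j 1 : Fin n → ℝ)) := by
  have hsm : ∀ (a : ℝ) (w : Fin n → ℝ), ((0:ℝ), a • w) = a • ((0:ℝ), w) := by
    intro a w; rw [Prod.smul_mk, smul_zero]
  have hv : ((0:ℝ), v) = ∑ j, v j • ((0:ℝ), (Pi.single j 1 : Fin n → ℝ)) := by
    simp_rw [← hsm, smul_single_one']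
    rw [Prod.ext_iff]
    constructor
    · rw [Prod.fst_sum]; simp
    · rw [Prod.snd_sum]; simp [Finset.univ_sum_single]
  rw [hv, map_sum]
  simp_rw [_root_.map_smul]

include hΦ hK hPSD in
lemma usol2_char {s : ℝ} (hs : -δc n K < s) (y : Fin n → ℝ) :
    usol2 Φ (s, Ymap Φ s y) = gradFn Φ y := by
  unfold usol2
  rw [Ginv_Ymap hΦ hK hPSD hs y]

include hΦ hK hPSD in
lemma usol2_dirderiv {t : ℝ} (ht : 0 ≤ t) (x : Fin n → ℝ) :
    fderiv ℝ (usol2 Φ) (t, x) (1, usol2 Φ (t, x)) = 0 := by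
  have hδ := δc_pos hK
  have ht' : -δc n K < t := lt_of_lt_of_le (neg_lt_zero.2 hδ) ht
  set y := Ginv Φ (t, x) with hy
  have hx : Ymap Φ t y = x := by
    have : Ginv Φ (t, x) = Ginv Φ ((t, x).1, (t, x).2) := rfl
    exact Ymap_Ginv hΦ hK hPSD ht' x
  have hca := usol2_contDiffAt hΦ hK hPSD (p := (t, x)) ht'
  have hd : HasFDerivAt (usol2 Φ) (fderiv ℝ (usol2 Φ) (t, x)) (t, x) :=
    (hca.differentiableAt one_ne_zero).hasFDerivAt
  have hYd : HasDerivAt (fun s : ℝ => Ymap Φ s y) (gradFn Φ y) t := by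
    unfold Ymap
    exact (((hasDerivAt_id t).smul_const (gradFn Φ y)).const_add y).congr_deriv
      (one_smul ℝ (gradFn Φ y))
  have hcurve : HasDerivAt (fun s : ℝ => ((s : ℝ), Ymap Φ s y)) (1, gradFn Φ y) t :=
    (hasDerivAt_id t).prodMk hYd
  have hd' : HasFDerivAt (usol2 Φ) (fderiv ℝ (usol2 Φ) (t, x)) (t, Ymap Φ t y) := by
    rw [hx]; exact hd
  have hcomp : HasDerivAt (fun s : ℝ => usol2 Φ (s, Ymap Φ s y))
      (fderiv ℝ (usol2 Φ) (t, x) (1, gradFn Φ y)) t :=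
    by have h := hd'.comp_hasDerivAt t hcurve; exact h
  have hEq : (fun s : ℝ => usol2 Φ (s, Ymap Φ s y)) =ᶠ[nhds t] fun _ => gradFn Φ y := by
    have hop : ∀ᶠ s in nhds t, -δc n K < s :=
      (isOpen_lt continuous_const continuous_id).mem_nhds ht'
    filter_upwards [hop] with s hs
    exact usol2_char hΦ hK hPSD hs y
  have h0 : HasDerivAt (fun s : ℝ => usol2 Φ (s, Ymap Φ s y)) 0 t :=
    HasDerivAt.congr_of_eventuallyEq (hasDerivAt_const t (gradFn Φ y)) hEq
  have huniq := h0.unique hcomp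
  have hval : usol2 Φ (t, x) = gradFn Φ y := by
    rw [← hx]
    exact usol2_char hΦ hK hPSD ht' y
  rw [hval, ← huniq]

include hΦ hK hPSD in
lemma usol2_pde {t : ℝ} (ht : 0 ≤ t) (x : Fin n → ℝ) (i : Fin n) :
    derivWithin (fun s => usol2 Φ (s, x) i) (Set.Ici 0) t
      + ∑ j : Fin n, usol2 Φ (t, x) j
          * fderiv ℝ (fun z => usol2 Φ (t, z) i) x (Pi.single j 1) = 0 := by
  have hδ := δc_pos hK
  have ht' : -δc n K < t := lt_of_lt_of_le (neg_lt_zero.2 hδ) ht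
  have hca := usol2_contDiffAt hΦ hK hPSD (p := (t, x)) ht'
  set Du := fderiv ℝ (usol2 Φ) (t, x) with hDu
  have hd : HasFDerivAt (usol2 Φ) Du (t, x) := (hca.differentiableAt one_ne_zero).hasFDerivAt
  -- time derivative
  have htime : derivWithin (fun s => usol2 Φ (s, x) i) (Set.Ici 0) t = Du (1, 0) i := by
    have hγ : HasDerivAt (fun s : ℝ => ((s : ℝ), x)) (1, (0 : Fin n → ℝ)) t :=
      (hasDerivAt_id t).prodMk (hasDerivAt_const t x)
    have h1 : HasDerivAt (fun s : ℝ => usol2 Φ (s, x)) (Du (1, 0)) t :=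
      by have h := hd.comp_hasDerivAt t hγ; exact h
    have h2 : HasDerivAt (fun s : ℝ => usol2 Φ (s, x) i) (Du (1, 0) i) t :=
      ((ContinuousLinearMap.proj (R := ℝ) (φ := fun _ : Fin n => ℝ)
        i).hasFDerivAt).comp_hasDerivAt t h1
    exact (h2.hasDerivWithinAt).derivWithin (uniqueDiffOn_Ici 0 t ht)
  -- space derivative
  have hspace : ∀ j, fderiv ℝ (fun z => usol2 Φ (t, z) i) x (Pi.single j 1)
      = Du (0, Pi.single j 1) i := by
    intro j
    have hγ : HasFDerivAt (fun z : Fin n → ℝ => ((t : ℝ), z))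
        (ContinuousLinearMap.inr ℝ ℝ (Fin n → ℝ)) x :=
      (hasFDerivAt_const t x).prodMk (hasFDerivAt_id x)
    have h1 : HasFDerivAt (fun z : Fin n → ℝ => usol2 Φ (t, z))
        (Du.comp (ContinuousLinearMap.inr ℝ ℝ (Fin n → ℝ))) x := hd.comp x hγ
    have h2 : HasFDerivAt (fun z : Fin n → ℝ => usol2 Φ (t, z) i)
        ((ContinuousLinearMap.proj (R := ℝ) (φ := fun _ : Fin n => ℝ) i).comp
          (Du.comp (ContinuousLinearMap.inr ℝ ℝ (Fin n → ℝ)))) x :=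
      ((ContinuousLinearMap.proj (R := ℝ) (φ := fun _ : Fin n => ℝ)
        i).hasFDerivAt).comp x h1
    rw [h2.fderiv]
    rfl
  rw [htime]
  simp_rw [hspace]
  have hsum : ∑ j : Fin n, usol2 Φ (t, x) j * Du (0, Pi.single j 1) i
      = Du (0, usol2 Φ (t, x)) i := by
    rw [clm_split Du (usol2 Φ (t, x))]
    simp only [Finset.sum_apply, Pi.smul_apply, smul_eq_mul]
  rw [hsum]
  have hfinal : Du (1, 0) i + Du (0, usol2 Φ (t, x)) i = Du (1, usol2 Φ (t, x)) i := by
    have : ((1:ℝ), usol2 Φ (t, x)) = ((1:ℝ), (0 : Fin n → ℝ)) + ((0:ℝ), usol2 Φ (t, x)) := by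
      simp
    rw [this, map_add]
    rfl
  rw [hfinal, hDu, usol2_dirderiv hΦ hK hPSD ht x]
  rfl

include hΦ hK hPSD in
lemma usol2_ic (x : Fin n → ℝ) : usol2 Φ (0, x) = gradFn Φ x := by
  have h0 : Ymap Φ 0 x = x := by unfold Ymap; simp
  have := usol2_char hΦ hK hPSD (s := 0) (neg_lt_zero.2 (δc_pos hK)) x
  rwa [h0] at this

end Backward

end BurgersAux

/-- the Cauchy problem for the multidimensional Burgers system with
initial data `∇Φ` (with `Φ` of class `C²` and `∇Φ` of bounded `C¹` norm) has a unique
global `C¹` solution on `[0,∞) × ℝⁿ` iff `Hess Φ(x)` is positive semidefinite for all `x`. -/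
theorem burgers_global_C1_solution_iff_hessian_posSemidef
    (n : ℕ) (Φ : (Fin n → ℝ) → ℝ) (hΦ : ContDiff ℝ 2 Φ)
    (hbd : ∃ K : ℝ, ∀ x, ‖gradFn Φ x‖ ≤ K ∧ ‖iteratedFDeriv ℝ 1 (gradFn Φ) x‖ ≤ K) :
    ((∃ u, IsGlobalSolBurgers n (gradFn Φ) 1 u) ∧
        ∀ u v, IsGlobalSolBurgers n (gradFn Φ) 1 u → IsGlobalSolBurgers n (gradFn Φ) 1 v →
          ∀ t ∈ Set.Ici (0 : ℝ), ∀ x, u t x = v t x) ↔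
      ∀ x : Fin n → ℝ, (hessMat Φ x).PosSemidef := by
  obtain ⟨K, hbd'⟩ := hbd
  have hK : ∀ x, ‖iteratedFDeriv ℝ 1 (gradFn Φ) x‖ ≤ K := fun x => (hbd' x).2
  have hδ : (0:ℝ) < BurgersAux.δc n K := BurgersAux.δc_pos hK
  constructor
  · rintro ⟨⟨u, hu⟩, -⟩ x
    exact BurgersAux.posSemidef_of_sol hu.1 hΦ hu.2.1 hu.2.2 x
  · intro hPSD
    constructor
    · refine ⟨fun t x => BurgersAux.usol2 Φ (t, x), ?_, ?_, ?_⟩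
      · intro p hp
        exact (BurgersAux.usol2_contDiffAt hΦ hK hPSD
          (lt_of_lt_of_le (neg_lt_zero.2 hδ) hp.1)).contDiffWithinAt
      · exact fun x => BurgersAux.usol2_ic hΦ hK hPSD x
      · exact fun t ht x i => BurgersAux.usol2_pde hΦ hK hPSD ht x i
    · intro u v hu hv t ht x
      set y := BurgersAux.Ginv Φ (t, x) with hy
      have ht' : -BurgersAux.δc n K < t := lt_of_lt_of_le (neg_lt_zero.2 hδ) ht
      have hx : y + t • gradFn Φ y = x := BurgersAux.Ymap_Ginv hΦ hK hPSD ht' x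
      rw [← hx]
      rw [BurgersAux.char_id hu.1 hu.2.1 hu.2.2 y ht,
        BurgersAux.char_id hv.1 hv.2.1 hv.2.2 y ht]
end

section
/- Let Φ : ℝⁿ → ℝ be a C³ convex function, i.e., Hess Φ(α) is positive semidefinite for every α ∈ ℝⁿ. Then for every fixed t ≥ 0, the characteristic map Π_t : ℝⁿ → ℝⁿ defined by Π_t(α) = α + t∇Φ(α) is a global C¹ diffeomorphism of ℝⁿ onto itself: it is bijective and its inverse x ↦ α(t,x) is continuously differentiable. -/
section aux
variable {n : ℕ}

lemma aux_sum_single (v : Fin n → ℝ) :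
    ∑ i, v i • (Pi.single i (1:ℝ) : Fin n → ℝ) = v := by
  funext j
  simp [Finset.sum_apply, Pi.single_apply]

lemma aux_clm_apply {W : Type*} [NormedAddCommGroup W] [NormedSpace ℝ W]
    (T : (Fin n → ℝ) →L[ℝ] W) (v : Fin n → ℝ) :
    T v = ∑ i, v i • T (Pi.single i 1) := by
  conv_lhs => rw [← aux_sum_single v]
  rw [map_sum]
  simp

variable {Φ : (Fin n → ℝ) → ℝ}

lemma aux_gradFn_contDiff (hΦ : ContDiff ℝ 3 Φ) : ContDiff ℝ 2 (gradFn Φ) := by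
  apply contDiff_pi.2
  intro i
  exact (hΦ.fderiv_right (by norm_num)).clm_apply contDiff_const

/-- derivative of `s ↦ Φ(β + s w)` -/
lemma aux_hasDerivAt_phi_line (hΦ : ContDiff ℝ 3 Φ) (β w : Fin n → ℝ) (s : ℝ) :
    HasDerivAt (fun s : ℝ => Φ (β + s • w)) (∑ i, w i * gradFn Φ (β + s • w) i) s := by
  have hL : HasDerivAt (fun s : ℝ => β + s • w) w s := by
    simpa using ((hasDerivAt_id s).smul_const w).const_add β
  have hΦd : HasFDerivAt Φ (fderiv ℝ Φ (β + s • w)) (β + s • w) :=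
    (hΦ.differentiable (by norm_num) _).hasFDerivAt
  have := hΦd.comp_hasDerivAt s hL
  refine this.congr_deriv (Eq.symm ?_)
  rw [aux_clm_apply (fderiv ℝ Φ (β + s • w)) w]
  simp [gradFn, mul_comm]

/-- the second-derivative map applied: `fderiv (fderiv Φ) α v (e j) = ∑ i, v i * H i j` -/
lemma aux_fderiv2 (α v : Fin n → ℝ) (j : Fin n) :
    fderiv ℝ (fderiv ℝ Φ) α v (Pi.single j 1) = ∑ i, v i * hessMat Φ α i j := by
  rw [aux_clm_apply (fderiv ℝ (fderiv ℝ Φ) α) v]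
  rw [ContinuousLinearMap.sum_apply]
  congr 1
  funext i
  have h2 : iteratedFDeriv ℝ 2 Φ α ![Pi.single i 1, Pi.single j 1]
      = fderiv ℝ (fderiv ℝ Φ) α (Pi.single i 1) (Pi.single j 1) := by
    rw [iteratedFDeriv_two_apply]
    simp
  simp only [ContinuousLinearMap.smul_apply, smul_eq_mul, hessMat, Matrix.of_apply, h2]

/-- derivative of `s ↦ (gradFn Φ (β + s w)) j` -/
lemma aux_hasDerivAt_grad_line (hΦ : ContDiff ℝ 3 Φ) (β w : Fin n → ℝ) (j : Fin n) (s : ℝ) :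
    HasDerivAt (fun s : ℝ => gradFn Φ (β + s • w) j)
      (∑ i, w i * hessMat Φ (β + s • w) i j) s := by
  have hL : HasDerivAt (fun s : ℝ => β + s • w) w s := by
    simpa using ((hasDerivAt_id s).smul_const w).const_add β
  have hf2 : ContDiff ℝ 2 (fderiv ℝ Φ) := hΦ.fderiv_right (by norm_num)
  have hD : HasFDerivAt (fderiv ℝ Φ) (fderiv ℝ (fderiv ℝ Φ) (β + s • w)) (β + s • w) :=
    (hf2.differentiable (by norm_num) _).hasFDerivAt
  have happ : HasFDerivAt (fun x => fderiv ℝ Φ x (Pi.single j 1))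
      ((ContinuousLinearMap.apply ℝ ℝ ((Pi.single j 1 : Fin n → ℝ))).comp
        (fderiv ℝ (fderiv ℝ Φ) (β + s • w))) (β + s • w) :=
    (ContinuousLinearMap.apply ℝ ℝ ((Pi.single j 1 : Fin n → ℝ))).hasFDerivAt.comp _ hD
  have := happ.comp_hasDerivAt s hL
  have h2 : HasDerivAt (fun s : ℝ => gradFn Φ (β + s • w) j)
      (fderiv ℝ (fderiv ℝ Φ) (β + s • w) w (Pi.single j 1)) s := by
    simpa [gradFn, Function.comp_def] using this
  rwa [aux_fderiv2 (β + s • w) w j] at h2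

/-- quadratic form of a PosSemidef matrix -/
lemma aux_quad_nonneg {H : Matrix (Fin n) (Fin n) ℝ} (hH : H.PosSemidef) (w : Fin n → ℝ) :
    0 ≤ ∑ j, (∑ i, w i * H i j) * w j := by
  have := hH.dotProduct_mulVec_nonneg w
  convert this using 1
  rfl
  simp only [Matrix.mulVec, dotProduct, star_trivial, Pi.star_apply]
  simp only [Finset.sum_mul, Finset.mul_sum]
  rw [Finset.sum_comm]
  congr 1; funext i; congr 1; funext j; ring

/-- MVT helper: if `k` has derivative `k'` everywhere and `k' ≥ 0` on `[0,1]` then `k 0 ≤ k 1`. -/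
lemma aux_mvt {k k' : ℝ → ℝ} (hk : ∀ s, HasDerivAt k (k' s) s)
    (h0 : ∀ s ∈ Set.Icc (0:ℝ) 1, 0 ≤ k' s) : k 0 ≤ k 1 := by
  have hmono : MonotoneOn k (Set.Icc (0:ℝ) 1) := by
    apply monotoneOn_of_deriv_nonneg (convex_Icc 0 1)
    · exact (fun s _ => (hk s).continuousAt.continuousWithinAt)
    · intro s hs
      exact ((hk s).differentiableAt).differentiableWithinAt
    · intro s hs
      rw [interior_Icc] at hs
      rw [(hk s).deriv]
      exact h0 s ⟨le_of_lt hs.1, le_of_lt hs.2⟩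
  exact hmono (by norm_num) (by norm_num) zero_le_one


/-- Key strong monotonicity: `⟨Π_t α − Π_t β, α − β⟩ ≥ ‖α − β‖₂²`. -/
lemma aux_key_mono (hΦ : ContDiff ℝ 3 Φ)
    (hconv : ∀ α : Fin n → ℝ, (hessMat Φ α).PosSemidef)
    {t : ℝ} (ht : 0 ≤ t) (α β : Fin n → ℝ) :
    ∑ j, ((α - β) j)^2
      ≤ ∑ j, ((α j + t * gradFn Φ α j) - (β j + t * gradFn Φ β j)) * (α - β) j := by
  set w := α - β with hw
  set h : ℝ → ℝ := fun s => ∑ j, ((β + s • w) j + t * gradFn Φ (β + s • w) j) * w j with hhdef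
  have hderiv : ∀ s, HasDerivAt h
      (∑ j, (w j + t * ∑ i, w i * hessMat Φ (β + s • w) i j) * w j) s := by
    intro s
    apply HasDerivAt.fun_sum
    intro j _
    apply HasDerivAt.mul_const
    apply HasDerivAt.add
    · have : HasDerivAt (fun s : ℝ => β j + s * w j) (w j) s := by
        simpa using ((hasDerivAt_id s).mul_const (w j)).const_add (β j)
      simpa [Pi.add_apply, Pi.smul_apply, smul_eq_mul] using this
    · exact ((aux_hasDerivAt_grad_line hΦ β w j s).const_mul t)
  set k : ℝ → ℝ := fun s => h s - s * ∑ j, (w j)^2 with hkdef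
  have hk0 : k 0 ≤ k 1 := by
    apply aux_mvt (k' := fun s =>
      (∑ j, (w j + t * ∑ i, w i * hessMat Φ (β + s • w) i j) * w j) - ∑ j, (w j)^2)
    · intro s
      exact ((hderiv s).sub (((hasDerivAt_id s).mul_const (∑ j, (w j)^2)))).congr_deriv (by simp)
    · intro s _
      have hq := aux_quad_nonneg (hconv (β + s • w)) w
      have : ∑ j, (w j + t * ∑ i, w i * hessMat Φ (β + s • w) i j) * w j
          = ∑ j, (w j)^2 + t * ∑ j, (∑ i, w i * hessMat Φ (β + s • w) i j) * w j := by
        rw [Finset.mul_sum, ← Finset.sum_add_distrib]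
        congr 1; funext j; ring
      rw [this]
      nlinarith [mul_nonneg ht hq]
  have h1 : h 1 = ∑ j, (α j + t * gradFn Φ α j) * w j := by
    simp [hhdef, hw]
  have h0 : h 0 = ∑ j, (β j + t * gradFn Φ β j) * w j := by
    simp [hhdef]
  have := hk0
  simp only [hkdef, h1, h0] at this
  have hfin : ∑ j, (w j)^2 ≤ ∑ j, ((α j + t * gradFn Φ α j) - (β j + t * gradFn Φ β j)) * w j := by
    simp only [sub_mul, Finset.sum_sub_distrib]
    linarith
  simpa [hw] using hfin


/-- derivative of `ψ = |·|²/2 + tΦ − ⟨x,·⟩` along a line -/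
lemma aux_hasDerivAt_psi_line (hΦ : ContDiff ℝ 3 Φ) (t : ℝ) (x β w : Fin n → ℝ) (s : ℝ) :
    HasDerivAt (fun s : ℝ => (∑ j, ((β + s • w) j)^2)/2 + t * Φ (β + s • w)
        - ∑ j, x j * (β + s • w) j)
      (∑ j, ((β + s • w) j + t * gradFn Φ (β + s • w) j - x j) * w j) s := by
  have hquad : HasDerivAt (fun s : ℝ => (∑ j, ((β + s • w) j)^2)/2)
      (∑ j, (β + s • w) j * w j) s := by
    have : HasDerivAt (fun s : ℝ => ∑ j, ((β + s • w) j)^2)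
        (∑ j, 2 * ((β + s • w) j) * w j) s := by
      apply HasDerivAt.fun_sum
      intro j _
      have hb : HasDerivAt (fun s : ℝ => β j + s * w j) (w j) s := by
        simpa using ((hasDerivAt_id s).mul_const (w j)).const_add (β j)
      have := (hb.mul hb)
      simp only [Pi.add_apply, Pi.smul_apply, smul_eq_mul, pow_two]
      refine this.congr_deriv (Eq.symm ?_)
      ring
    have h2 := this.div_const 2
    refine h2.congr_deriv (Eq.symm ?_)
    rw [Finset.sum_div]
    congr 1; funext j; ring
  have hphi : HasDerivAt (fun s : ℝ => t * Φ (β + s • w))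
      (t * ∑ i, w i * gradFn Φ (β + s • w) i) s :=
    (aux_hasDerivAt_phi_line hΦ β w s).const_mul t
  have hlin : HasDerivAt (fun s : ℝ => ∑ j, x j * (β + s • w) j)
      (∑ j, x j * w j) s := by
    apply HasDerivAt.fun_sum
    intro j _
    have hb : HasDerivAt (fun s : ℝ => β j + s * w j) (w j) s := by
      simpa using ((hasDerivAt_id s).mul_const (w j)).const_add (β j)
    simpa [Pi.add_apply, Pi.smul_apply, smul_eq_mul] using hb.const_mul (x j)
  have := (hquad.add hphi).sub hlin
  refine this.congr_deriv (Eq.symm ?_)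
  rw [Finset.mul_sum, ← Finset.sum_add_distrib, ← Finset.sum_sub_distrib]
  congr 1; funext j; ring

/-- surjectivity of the characteristic map -/
lemma aux_surj (hΦ : ContDiff ℝ 3 Φ)
    (hconv : ∀ α : Fin n → ℝ, (hessMat Φ α).PosSemidef)
    {t : ℝ} (ht : 0 ≤ t) (x : Fin n → ℝ) :
    ∃ α : Fin n → ℝ, α + t • gradFn Φ α = x := by
  set ψ : (Fin n → ℝ) → ℝ :=
    fun α => (∑ j, (α j)^2)/2 + t * Φ α - ∑ j, x j * α j with hψdef
  -- strong convexity lower bound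
  have hlb : ∀ α : Fin n → ℝ,
      ψ 0 + (∑ j, (t * gradFn Φ 0 j - x j) * α j) + (∑ j, (α j)^2)/2 ≤ ψ α := by
    intro α
    set C : ℝ := ∑ j, (t * gradFn Φ 0 j - x j) * α j with hC
    set S : ℝ := ∑ j, (α j)^2 with hS
    have hline : ∀ s : ℝ, HasDerivAt (fun s : ℝ => ψ (s • α))
        (∑ j, ((s • α) j + t * gradFn Φ (s • α) j - x j) * α j) s := by
      intro s
      have := aux_hasDerivAt_psi_line hΦ t x 0 α s
      simpa [hψdef] using this
    have hm : ∀ s : ℝ, HasDerivAt (fun s : ℝ => ψ (s • α) - (s * C + s^2/2 * S))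
        ((∑ j, ((s • α) j + t * gradFn Φ (s • α) j - x j) * α j) - (C + s * S)) s := by
      intro s
      apply (hline s).sub
      have h1 : HasDerivAt (fun s : ℝ => s * C) C s := by
        simpa using (hasDerivAt_id s).mul_const C
      have h2 : HasDerivAt (fun s : ℝ => s^2/2 * S) (s * S) s := by
        have hp : HasDerivAt (fun s : ℝ => s^2) (2*s) s := by
          simpa using hasDerivAt_pow 2 s
        have := (hp.div_const 2).mul_const S
        refine this.congr_deriv (Eq.symm ?_)
        ring
      exact h1.add h2
    have hmono : (fun s : ℝ => ψ (s • α) - (s * C + s^2/2 * S)) 0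
        ≤ (fun s : ℝ => ψ (s • α) - (s * C + s^2/2 * S)) 1 := by
      apply aux_mvt (hk := hm)
      intro s hs
      rcases eq_or_lt_of_le hs.1 with h0 | h0
      · subst h0
        simp [hC]
      · -- use key monotonicity between s•α and 0
        have hkey := aux_key_mono hΦ hconv ht (s • α) 0
        have hL : ∑ j, ((s • α - 0) j)^2 = s^2 * S := by
          rw [hS, Finset.mul_sum]
          congr 1; funext j
          simp [mul_pow]
        have hR : ∑ j, ((s • α) j + t * gradFn Φ (s • α) j
              - ((0:Fin n → ℝ) j + t * gradFn Φ 0 j)) * (s • α - 0) j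
            = s * ∑ j, ((s • α) j + t * gradFn Φ (s • α) j - t * gradFn Φ 0 j) * α j := by
          rw [Finset.mul_sum]
          congr 1; funext j
          simp only [Pi.sub_apply, Pi.smul_apply, Pi.zero_apply, smul_eq_mul]
          ring
        rw [hL, hR] at hkey
        have hs2 : s * (s * S) ≤ s * ∑ j, ((s • α) j + t * gradFn Φ (s • α) j
            - t * gradFn Φ 0 j) * α j := by
          calc s * (s * S) = s^2 * S := by ring
          _ ≤ _ := hkey
        have := le_of_mul_le_mul_left hs2 h0
        have hdiff : ∑ j, ((s • α) j + t * gradFn Φ (s • α) j - x j) * α j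
            = (∑ j, ((s • α) j + t * gradFn Φ (s • α) j - t * gradFn Φ 0 j) * α j) + C := by
          rw [hC, ← Finset.sum_add_distrib]
          congr 1; funext j; ring
        rw [hdiff]
        linarith
    simp only [one_smul, zero_smul, one_pow] at hmono
    have hψ0 : ψ ((0:ℝ) • α) = ψ 0 := by norm_num
    nlinarith [hmono]
  -- coercivity
  set B : ℝ := ∑ j, |t * gradFn Φ 0 j - x j| with hB
  have hnormbd : ∀ α : Fin n → ℝ,
      ψ 0 - B * ‖α‖ + ‖α‖^2/2 ≤ ψ α := by
    intro α
    have hS : ‖α‖^2 ≤ ∑ j, (α j)^2 := by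
      have hsq : ‖α‖ ≤ Real.sqrt (∑ j, (α j)^2) := by
        rw [pi_norm_le_iff_of_nonneg (Real.sqrt_nonneg _)]
        intro i
        rw [show ‖α i‖ = |α i| from rfl, ← Real.sqrt_sq_eq_abs]
        apply Real.sqrt_le_sqrt
        exact Finset.single_le_sum (f := fun j => (α j)^2)
          (fun j _ => sq_nonneg _) (Finset.mem_univ i)
      calc ‖α‖^2 ≤ (Real.sqrt (∑ j, (α j)^2))^2 := by
            apply pow_le_pow_left₀ (norm_nonneg _) hsq
      _ = ∑ j, (α j)^2 := Real.sq_sqrt (Finset.sum_nonneg fun j _ => sq_nonneg _)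
    have hC : -(B * ‖α‖) ≤ ∑ j, (t * gradFn Φ 0 j - x j) * α j := by
      rw [hB, Finset.sum_mul, ← Finset.sum_neg_distrib]
      apply Finset.sum_le_sum
      intro j _
      have h1 : |(t * gradFn Φ 0 j - x j) * α j| ≤ |t * gradFn Φ 0 j - x j| * ‖α‖ := by
        rw [abs_mul]
        apply mul_le_mul_of_nonneg_left _ (abs_nonneg _)
        exact (norm_le_pi_norm α j)
      have := neg_abs_le ((t * gradFn Φ 0 j - x j) * α j)
      linarith
    have := hlb α
    linarith
  have hcont : Continuous ψ := by
    apply Continuous.sub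
    · exact ((continuous_finset_sum _ fun j _ => (continuous_apply j).pow 2).div_const 2).add
        (continuous_const.mul hΦ.continuous)
    · exact continuous_finset_sum _ fun j _ => continuous_const.mul (continuous_apply j)
  have hcoer : Filter.Tendsto ψ (Filter.cocompact _) Filter.atTop := by
    have hpoly : Filter.Tendsto (fun r : ℝ => ψ 0 - B * r + r^2/2) Filter.atTop Filter.atTop := by
      have h1 : Filter.Tendsto (fun r : ℝ => r * (r/2 - B) + ψ 0) Filter.atTop Filter.atTop := by
        apply Filter.tendsto_atTop_add_const_right
        apply Filter.Tendsto.atTop_mul_atTop₀ Filter.tendsto_id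
        apply Filter.tendsto_atTop_add_const_right
        exact Filter.tendsto_id.atTop_div_const (by norm_num)
      convert h1 using 2 with r
      ring
    apply Filter.tendsto_atTop_mono hnormbd
    exact hpoly.comp tendsto_norm_cocompact_atTop
  obtain ⟨α₀, hmin⟩ := hcont.exists_forall_le hcoer
  refine ⟨α₀, ?_⟩
  funext i
  -- first-order condition along direction `Pi.single i 1`
  have hline := aux_hasDerivAt_psi_line hΦ t x α₀ (Pi.single i 1) 0
  have hval : (∑ j, ((α₀ + (0:ℝ) • (Pi.single i 1 : Fin n → ℝ)) j
        + t * gradFn Φ (α₀ + (0:ℝ) • (Pi.single i 1 : Fin n → ℝ)) j - x j)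
        * (Pi.single i 1 : Fin n → ℝ) j)
      = α₀ i + t * gradFn Φ α₀ i - x i := by
    rw [Finset.sum_eq_single i]
    · simp
    · intro j _ hj
      simp [Pi.single_apply, hj]
    · simp
  have hloc : IsLocalMin (fun s : ℝ => (∑ j, ((α₀ + s • (Pi.single i 1 : Fin n → ℝ)) j)^2)/2
      + t * Φ (α₀ + s • (Pi.single i 1 : Fin n → ℝ))
      - ∑ j, x j * (α₀ + s • (Pi.single i 1 : Fin n → ℝ)) j) 0 := by
    apply Filter.Eventually.of_forall
    intro s
    have h1 := hmin (α₀ + s • (Pi.single i 1 : Fin n → ℝ))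
    simpa [hψdef] using h1
  have hd0 := hloc.deriv_eq_zero
  rw [hline.deriv, hval] at hd0
  have : α₀ i + t * gradFn Φ α₀ i = x i := by linarith
  simpa using this



/-- injectivity of the characteristic map -/
lemma aux_inj (hΦ : ContDiff ℝ 3 Φ)
    (hconv : ∀ α : Fin n → ℝ, (hessMat Φ α).PosSemidef)
    {t : ℝ} (ht : 0 ≤ t) :
    Function.Injective (fun α : Fin n → ℝ => α + t • gradFn Φ α) := by
  intro α β hfeq
  have hkey := aux_key_mono hΦ hconv ht α β
  have hz : ∀ j, α j + t * gradFn Φ α j = β j + t * gradFn Φ β j := by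
    intro j
    have := congrFun hfeq j
    simpa [Pi.add_apply, Pi.smul_apply, smul_eq_mul] using this
  have h0 : ∑ j, ((α - β) j)^2 ≤ 0 := by
    calc ∑ j, ((α - β) j)^2
        ≤ ∑ j, ((α j + t * gradFn Φ α j) - (β j + t * gradFn Φ β j)) * (α - β) j := hkey
    _ = 0 := by
        apply Finset.sum_eq_zero
        intro j _
        rw [hz j]
        ring
  have hall : ∀ j ∈ Finset.univ, ((α - β) j)^2 = 0 := by
    rw [← Finset.sum_eq_zero_iff_of_nonneg (fun j _ => sq_nonneg _)]
    exact le_antisymm h0 (Finset.sum_nonneg fun j _ => sq_nonneg _)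
  funext j
  have := hall j (Finset.mem_univ j)
  have : (α - β) j = 0 := by
    exact pow_eq_zero_iff (by norm_num) |>.mp this
  simpa [sub_eq_zero] using this

/-- invertible derivative of the characteristic map -/
lemma aux_deriv_equiv (hΦ : ContDiff ℝ 3 Φ)
    (hconv : ∀ α : Fin n → ℝ, (hessMat Φ α).PosSemidef)
    {t : ℝ} (ht : 0 ≤ t) (a : Fin n → ℝ) :
    ∃ A : (Fin n → ℝ) ≃L[ℝ] (Fin n → ℝ),
      HasFDerivAt (fun α : Fin n → ℝ => α + t • gradFn Φ α)
        (A : (Fin n → ℝ) →L[ℝ] (Fin n → ℝ)) a := by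
  have hG := aux_gradFn_contDiff hΦ
  have hGd : DifferentiableAt ℝ (gradFn Φ) a :=
    (hG.differentiable (by norm_num)).differentiableAt
  set D : (Fin n → ℝ) →L[ℝ] (Fin n → ℝ) := fderiv ℝ (gradFn Φ) a with hD
  set T : (Fin n → ℝ) →L[ℝ] (Fin n → ℝ) := ContinuousLinearMap.id ℝ _ + t • D with hT
  -- component formula for D
  have hDcomp : ∀ v : Fin n → ℝ, ∀ j, D v j = ∑ i, v i * hessMat Φ a i j := by
    intro v j
    have hline : HasDerivAt (fun s : ℝ => a + s • v) v 0 := by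
      simpa using ((hasDerivAt_id (0:ℝ)).smul_const v).const_add a
    have ha0 : a + (0:ℝ) • v = a := by simp
    have h2 : HasDerivAt (fun s : ℝ => gradFn Φ (a + s • v)) (D v) 0 := by
      have hF : HasFDerivAt (gradFn Φ) D (a + (0:ℝ) • v) := by
        rw [ha0]; exact hGd.hasFDerivAt
      exact hF.comp_hasDerivAt 0 hline
    have h2j := hasDerivAt_pi.1 h2 j
    have h1 := aux_hasDerivAt_grad_line hΦ a v j 0
    rw [ha0] at h1
    exact h2j.unique h1
  -- injectivity of T
  have hTinj : Function.Injective T := by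
    have hker : ∀ v, T v = 0 → v = 0 := by
      intro v hv
      have hcomp : ∀ j, v j + t * (D v) j = 0 := by
        intro j
        have := congrFun hv j
        simpa [hT, Pi.add_apply, Pi.smul_apply, smul_eq_mul] using this
      have hsum : ∑ j, (v j + t * ∑ i, v i * hessMat Φ a i j) * v j = 0 := by
        apply Finset.sum_eq_zero
        intro j _
        rw [← hDcomp v j, hcomp j]
        ring
      have hexp : ∑ j, (v j + t * ∑ i, v i * hessMat Φ a i j) * v j
          = ∑ j, (v j)^2 + t * ∑ j, (∑ i, v i * hessMat Φ a i j) * v j := by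
        rw [Finset.mul_sum, ← Finset.sum_add_distrib]
        congr 1; funext j; ring
      have hq := aux_quad_nonneg (hconv a) v
      have hS : ∑ j, (v j)^2 ≤ 0 := by
        rw [hexp] at hsum
        nlinarith [mul_nonneg ht hq]
      have hall : ∀ j ∈ Finset.univ, (v j)^2 = 0 := by
        rw [← Finset.sum_eq_zero_iff_of_nonneg (fun j _ => sq_nonneg _)]
        exact le_antisymm hS (Finset.sum_nonneg fun j _ => sq_nonneg _)
      funext j
      have := pow_eq_zero_iff (n := 2) (by norm_num) |>.mp (hall j (Finset.mem_univ j))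
      simpa using this
    intro a b hab
    have := hker (a - b) (by rw [map_sub, hab, sub_self])
    simpa [sub_eq_zero] using this
  have hTsurj : Function.Surjective T :=
    LinearMap.injective_iff_surjective.mp hTinj
  set A : (Fin n → ℝ) ≃L[ℝ] (Fin n → ℝ) :=
    (LinearEquiv.ofBijective (T : (Fin n → ℝ) →ₗ[ℝ] (Fin n → ℝ))
      ⟨hTinj, hTsurj⟩).toContinuousLinearEquiv with hA
  have hAcoe : (A : (Fin n → ℝ) →L[ℝ] (Fin n → ℝ)) = T := by
    ext v
    rfl
  refine ⟨A, ?_⟩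
  rw [hAcoe]
  have := (hasFDerivAt_id a).add (hGd.hasFDerivAt.const_smul t)
  simpa [hT] using this

end aux

/-- for a `C³` convex `Φ` and each fixed `t ≥ 0`, the characteristic map
`Π_t(α) = α + t∇Φ(α)` is a global `C¹` diffeomorphism of `ℝⁿ`: it is bijective and
its inverse is continuously differentiable. -/
theorem characteristic_map_global_C1_diffeomorphism
    (n : ℕ) (Φ : (Fin n → ℝ) → ℝ) (hΦ : ContDiff ℝ 3 Φ)
    (hconv : ∀ α : Fin n → ℝ, (hessMat Φ α).PosSemidef) :
    ∀ t ∈ Set.Ici (0 : ℝ),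
      Function.Bijective (fun α : Fin n → ℝ => α + t • gradFn Φ α) ∧
      ∃ g : (Fin n → ℝ) → (Fin n → ℝ),
        Function.LeftInverse g (fun α : Fin n → ℝ => α + t • gradFn Φ α) ∧
        Function.RightInverse g (fun α : Fin n → ℝ => α + t • gradFn Φ α) ∧
        ContDiff ℝ 1 g := by
  intro t ht
  rw [Set.mem_Ici] at ht
  set f : (Fin n → ℝ) → (Fin n → ℝ) := fun α => α + t • gradFn Φ α with hf
  have hinj : Function.Injective f := aux_inj hΦ hconv ht
  have hsurj : Function.Surjective f := fun x => aux_surj hΦ hconv ht x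
  have hbij : Function.Bijective f := ⟨hinj, hsurj⟩
  set g : (Fin n → ℝ) → (Fin n → ℝ) := Function.invFun f with hg
  have hli : Function.LeftInverse g f := Function.leftInverse_invFun hinj
  have hri : Function.RightInverse g f := Function.rightInverse_invFun hsurj
  refine ⟨hbij, g, hli, hri, ?_⟩
  -- smoothness of f
  have hfc : ContDiff ℝ 1 f := by
    have : ContDiff ℝ 2 f :=
      contDiff_id.add ((aux_gradFn_contDiff hΦ).const_smul t)
    exact this.of_le (by norm_num)
  rw [contDiff_iff_contDiffAt]
  intro y
  set a : Fin n → ℝ := g y with ha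
  have hfa : f a = y := hri y
  obtain ⟨A, hA⟩ := aux_deriv_equiv hΦ hconv ht a
  have hcd : ContDiffAt ℝ 1 f a := hfc.contDiffAt
  have hCD : ContDiffAt ℝ 1 (hcd.localInverse hA one_ne_zero) (f a) :=
    hcd.to_localInverse hA one_ne_zero
  have hstrict := hcd.hasStrictFDerivAt' hA one_ne_zero
  have hev : ∀ᶠ z in nhds (f a), f (hstrict.localInverse f A a z) = z :=
    hstrict.eventually_right_inverse
  have heq : g =ᶠ[nhds y] hcd.localInverse hA one_ne_zero := by
    rw [← hfa]
    apply hev.mono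
    intro z hz
    have : g (f (hstrict.localInverse f A a z)) = hstrict.localInverse f A a z := hli _
    rw [hz] at this
    exact this
  rw [← hfa]
  exact hCD.congr_of_eventuallyEq (by rw [hfa]; exact heq)
end

section
/- Let Φ : ℝⁿ → ℝ be a C³ convex function with Hess Φ(x) ≥ δ·I for all x ∈ ℝⁿ for some δ > 0, let u be the unique global C² solution on [0,∞) × ℝⁿ of the multidimensional Burgers system ∂u/∂t + Σ_{j=1}^n u_j ∂u/∂x_j = 0 with u(0,x) = ∇Φ(x), and let U ∈ C³([0,∞) × ℝⁿ) be a potential with u_i = ∂U/∂x_i. Then for any compact set Ω ⊆ ℝⁿ, letting Ω(t) = { α + t∇Φ(α) : α ∈ Ω } be the image of Ω under the characteristic flow at time t, one has ‖D²U(t,·)‖_{L^∞(Ω(t))} ≤ C̃₃(1+t)^{-1} and ‖D³U(t,·)‖_{L^∞(Ω(t))} ≤ C̃₄(1+t)^{-2} for all t ≥ 0, where C̃₃ and C̃₄ are constants independent of t but depending on δ and the set Ω. -/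
section BurgersAux

open Set

/-- standard basis vector -/
noncomputable def bv {n : ℕ} (i : Fin n) : Fin n → ℝ := Pi.single i 1

lemma bv_apply {n : ℕ} (i j : Fin n) : bv i j = if j = i then (1:ℝ) else 0 := by
  simp [bv, Pi.single_apply]

lemma bv_coord_le {n : ℕ} (i j : Fin n) : |bv i j| ≤ 1 := by
  rw [bv_apply]
  split_ifs <;> simp

lemma bv_norm_le {n : ℕ} (j : Fin n) : ‖(bv j : Fin n → ℝ)‖ ≤ 1 := by
  rw [pi_norm_le_iff_of_nonneg zero_le_one]
  intro i
  rw [Real.norm_eq_abs]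
  exact bv_coord_le j i

noncomputable def sq' {n : ℕ} (v : Fin n → ℝ) : ℝ := ∑ i, v i ^ 2

lemma sq'_nonneg {n : ℕ} (v : Fin n → ℝ) : 0 ≤ sq' v :=
  Finset.sum_nonneg fun _ _ => sq_nonneg _

lemma sq'_bv {n : ℕ} (j : Fin n) : sq' (bv j) = 1 := by
  simp only [sq']
  rw [Finset.sum_eq_single j (fun b _ hb => by simp [bv_apply, hb]) (by simp)]
  simp [bv_apply]

lemma coord_sq_le_sq' {n : ℕ} (v : Fin n → ℝ) (l : Fin n) : v l ^ 2 ≤ sq' v :=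
  Finset.single_le_sum (fun i _ => sq_nonneg (v i)) (Finset.mem_univ l)

lemma sq'_le_of_coord {n : ℕ} (w : Fin n → ℝ) (a : ℝ) (ha : 0 ≤ a)
    (hw : ∀ l, |w l| ≤ a) : sq' w ≤ n * a ^ 2 := by
  calc sq' w ≤ ∑ _l : Fin n, a ^ 2 := Finset.sum_le_sum fun l _ => by
        rw [← sq_abs]
        exact pow_le_pow_left₀ (abs_nonneg _) (hw l) 2
    _ = n * a ^ 2 := by simp [Finset.sum_const, Finset.card_univ, nsmul_eq_mul]

lemma vec_eq_sum_bv {n : ℕ} (y : Fin n → ℝ) : y = ∑ l, y l • bv l := by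
  funext j
  simp [bv, Pi.single_apply, Finset.sum_apply, mul_ite, eq_comm]

lemma clm_apply_eq_sum {n : ℕ} {F : Type*} [AddCommGroup F] [Module ℝ F]
    [TopologicalSpace F] (T : (Fin n → ℝ) →L[ℝ] F) (y : Fin n → ℝ) :
    T y = ∑ l, y l • T (bv l) := by
  conv_lhs => rw [vec_eq_sum_bv y]
  rw [map_sum]
  exact Finset.sum_congr rfl fun l _ => T.map_smul _ _

lemma clm_apply_coord {n : ℕ} (T : (Fin n → ℝ) →L[ℝ] (Fin n → ℝ)) (y : Fin n → ℝ)
    (i : Fin n) : T y i = ∑ l, y l * T (bv l) i := by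
  rw [clm_apply_eq_sum T y]
  simp [Finset.sum_apply]

lemma multilinear_norm_le_sum {k n : ℕ} {F : Type*} [NormedAddCommGroup F] [NormedSpace ℝ F]
    (f : ContinuousMultilinearMap ℝ (fun _ : Fin k => (Fin n → ℝ)) F) :
    ‖f‖ ≤ ∑ d : Fin k → Fin n, ‖f (fun p => bv (d p))‖ := by
  apply f.opNorm_le_bound (by positivity)
  intro m
  have hm : (fun p => m p) = fun p => ∑ i : Fin n, m p i • bv i := by
    funext p j
    simp [bv_apply, Finset.sum_apply, mul_ite]
  calc ‖f m‖ = ‖∑ d : Fin k → Fin n, (∏ p, m p (d p)) • f (fun p => bv (d p))‖ := by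
        conv_lhs => rw [show m = fun p => m p from rfl, hm]
        have h1 : f (fun p => ∑ i : Fin n, m p i • bv i)
            = ∑ d : Fin k → Fin n, f (fun p => m p (d p) • bv (d p)) :=
          f.toMultilinearMap.map_sum (fun p i => m p i • bv i)
        rw [h1]
        congr 1
        refine Finset.sum_congr rfl fun d _ => ?_
        exact f.toMultilinearMap.map_smul_univ (fun p => m p (d p)) (fun p => bv (d p))
    _ ≤ ∑ d : Fin k → Fin n, ‖(∏ p, m p (d p)) • f (fun p => bv (d p))‖ :=
        norm_sum_le _ _
    _ ≤ ∑ d : Fin k → Fin n, ‖f (fun p => bv (d p))‖ * ∏ p, ‖m p‖ := by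
        refine Finset.sum_le_sum fun d _ => ?_
        rw [norm_smul, mul_comm]
        gcongr
        calc |∏ p, m p (d p)| = ∏ p, |m p (d p)| := by rw [Finset.abs_prod]
          _ ≤ ∏ p, ‖m p‖ := Finset.prod_le_prod (fun _ _ => abs_nonneg _)
              (fun p _ => norm_le_pi_norm (m p) (d p))
    _ = (∑ d : Fin k → Fin n, ‖f (fun p => bv (d p))‖) * ∏ p, ‖m p‖ := by
        rw [Finset.sum_mul]

lemma inverse_exists {n : ℕ} (A : (Fin n → ℝ) →L[ℝ] (Fin n → ℝ)) {c : ℝ} (hc : 0 < c)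
    (hA : ∀ v, c * sq' v ≤ ∑ i, v i * A v i) :
    ∃ B : (Fin n → ℝ) →L[ℝ] (Fin n → ℝ), (∀ w, A (B w) = w) ∧ (∀ v, B (A v) = v) ∧
      ∀ w, c ^ 2 * sq' (B w) ≤ sq' w := by
  have hinj : Function.Injective (A : (Fin n → ℝ) →ₗ[ℝ] (Fin n → ℝ)) := by
    rw [← LinearMap.ker_eq_bot, LinearMap.ker_eq_bot']
    intro v hv
    have h0 : c * sq' v ≤ 0 := by
      have := hA v
      simpa [show A v = 0 from hv] using this
    have hsq : sq' v = 0 :=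
      le_antisymm (nonpos_of_mul_nonpos_right h0 hc |>.trans_eq rfl) (sq'_nonneg v)
    funext i
    have := (Finset.sum_eq_zero_iff_of_nonneg
      (fun i _ => sq_nonneg (v i))).1 hsq i (Finset.mem_univ i)
    exact pow_eq_zero_iff (n := 2) (by norm_num) |>.1 this
  have hbij : Function.Bijective (A : (Fin n → ℝ) →ₗ[ℝ] (Fin n → ℝ)) :=
    ⟨hinj, (LinearMap.injective_iff_surjective).1 hinj⟩
  let eqv := LinearEquiv.ofBijective (A : (Fin n → ℝ) →ₗ[ℝ] (Fin n → ℝ)) hbij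
  refine ⟨LinearMap.toContinuousLinearMap (eqv.symm : (Fin n → ℝ) →ₗ[ℝ] (Fin n → ℝ)),
    ?_, ?_, ?_⟩
  · intro w
    exact eqv.apply_symm_apply w
  · intro v
    exact eqv.symm_apply_apply v
  · intro w
    set v := LinearMap.toContinuousLinearMap (eqv.symm : (Fin n → ℝ) →ₗ[ℝ] (Fin n → ℝ)) w
      with hv
    have hAv : A v = w := eqv.apply_symm_apply w
    have h1 : c * sq' v ≤ ∑ i, v i * w i := by simpa [hAv] using hA v
    have h2 : (∑ i, v i * w i) ^ 2 ≤ sq' v * sq' w := by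
      simpa [sq'] using Finset.sum_mul_sq_le_sq_mul_sq Finset.univ v w
    have hvn := sq'_nonneg v
    have hwn := sq'_nonneg w
    rcases eq_or_lt_of_le hvn with h | h
    · rw [← h]; simpa using hwn
    · have hS : 0 ≤ ∑ i, v i * w i := le_trans (by positivity) h1
      nlinarith [mul_le_mul h1 h1 (by positivity) hS]

lemma uniqueDiffOn_S (n : ℕ) :
    UniqueDiffOn ℝ ((Set.Ici (0:ℝ)) ×ˢ (Set.univ : Set (Fin n → ℝ))) := by
  apply uniqueDiffOn_convex ((convex_Ici 0).prod convex_univ)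
  rw [interior_prod_eq, interior_Ici, interior_univ]
  exact (nonempty_Ioi (a := (0:ℝ))).prod univ_nonempty

theorem constancy {n : ℕ} {Φ : (Fin n → ℝ) → ℝ}
    {u : ℝ → (Fin n → ℝ) → (Fin n → ℝ)}
    (hu : IsGlobalSolBurgers n (gradFn Φ) 2 u)
    (α : Fin n → ℝ) {t : ℝ} (ht : 0 ≤ t) :
    u t (α + t • gradFn Φ α) = gradFn Φ α := by
  obtain ⟨hreg, hinit, hpde⟩ := hu
  set c := gradFn Φ α with hc
  set S : Set (ℝ × (Fin n → ℝ)) := Set.Ici 0 ×ˢ Set.univ with hSdef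
  have hSuniq : UniqueDiffOn ℝ S := uniqueDiffOn_S n
  set J : ℝ × (Fin n → ℝ) → (Fin n → ℝ) := fun p => u p.1 p.2 with hJ
  set F : ℝ × (Fin n → ℝ) → (ℝ × (Fin n → ℝ)) →L[ℝ] (Fin n → ℝ) :=
    fun p => fderivWithin ℝ J S p with hF
  have hmem : ∀ s : ℝ, 0 ≤ s → ∀ x : Fin n → ℝ, ((s, x) : ℝ × (Fin n → ℝ)) ∈ S := by
    intro s hs x; exact ⟨hs, trivial⟩
  have hdiff : DifferentiableOn ℝ J S := hreg.differentiableOn (by norm_num)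
  have hFd : ∀ p ∈ S, HasFDerivWithinAt J (F p) S p := fun p hp =>
    (hdiff p hp).hasFDerivWithinAt
  set inR : (Fin n → ℝ) →L[ℝ] ℝ × (Fin n → ℝ) :=
    (0 : (Fin n → ℝ) →L[ℝ] ℝ).prod (ContinuousLinearMap.id ℝ _) with hinRdef
  have hslice : ∀ s : ℝ, 0 ≤ s → ∀ x : Fin n → ℝ,
      HasFDerivAt (u s) ((F (s,x)).comp inR) x := by
    intro s hs x
    have hι : HasFDerivAt (fun x' : Fin n → ℝ => ((s : ℝ), x')) inR x :=
      HasFDerivAt.prodMk (hasFDerivAt_const s x) (hasFDerivAt_id x)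
    have h2 := (hFd (s,x) (hmem s hs x)).comp x
      (hι.hasFDerivWithinAt (s := Set.univ)) (fun y _ => hmem s hs y)
    rw [hasFDerivWithinAt_univ] at h2
    exact h2
  have htime : ∀ s : ℝ, 0 ≤ s → ∀ x : Fin n → ℝ,
      HasDerivWithinAt (fun s' => u s' x) (F (s,x) (1, 0)) (Set.Ici 0) s := by
    intro s hs x
    have hγx : HasDerivAt (fun s' : ℝ => ((s' : ℝ), x)) (1, (0 : Fin n → ℝ)) s :=
      HasDerivAt.prodMk (hasDerivAt_id' (x := s)) (hasDerivAt_const s x)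
    exact (hFd (s,x) (hmem s hs x)).comp_hasDerivWithinAt s hγx.hasDerivWithinAt
      (fun s' hs' => hmem s' hs' x)
  have hPDE : ∀ s : ℝ, 0 ≤ s → ∀ x : Fin n → ℝ,
      F (s,x) (1, 0) = - ((F (s,x)).comp inR) (u s x) := by
    intro s hs x
    funext i
    have hpde' := hpde s hs x i
    have hdw : derivWithin (fun s' => u s' x i) (Set.Ici 0) s = F (s,x) (1,0) i := by
      have h1 : HasDerivWithinAt (fun s' => u s' x i) (F (s,x) (1,0) i) (Set.Ici 0) s := by
        have := (ContinuousLinearMap.proj (R := ℝ) (φ := fun _ : Fin n => ℝ)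
          i).hasFDerivAt.comp_hasDerivWithinAt s (htime s hs x)
        exact this
      exact h1.derivWithin (uniqueDiffOn_Ici 0 s hs)
    have hfd : ∀ j, fderiv ℝ (fun y => u s y i) x (Pi.single j 1)
        = ((F (s,x)).comp inR) (bv j) i := by
      intro j
      have h1 : HasFDerivAt (fun y => u s y i)
          ((ContinuousLinearMap.proj (R := ℝ) (φ := fun _ : Fin n => ℝ) i).comp
            ((F (s,x)).comp inR)) x :=
        (ContinuousLinearMap.proj (R := ℝ) (φ := fun _ : Fin n => ℝ)
          i).hasFDerivAt.comp x (hslice s hs x)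
      rw [h1.fderiv]
      rfl
    rw [hdw] at hpde'
    have hexp : ((F (s,x)).comp inR) (u s x) i
        = ∑ j, u s x j * ((F (s,x)).comp inR) (bv j) i := by
      rw [clm_apply_eq_sum ((F (s,x)).comp inR) (u s x)]
      simp [Finset.sum_apply]
    rw [Pi.neg_apply, hexp]
    rw [show (∑ j, u s x j * fderiv ℝ (fun y => u s y i) x (Pi.single j 1))
        = ∑ j, u s x j * ((F (s,x)).comp inR) (bv j) i from
      Finset.sum_congr rfl fun j _ => by rw [hfd j]] at hpde'
    linarith
  set w : ℝ → (Fin n → ℝ) := fun s => u s (α + s • c) with hw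
  set vfun : ℝ → (Fin n → ℝ) := fun s => w s - c with hv
  set f' : ℝ → (Fin n → ℝ) :=
    fun s => - ((F (s, α + s • c)).comp inR) (vfun s) with hf'
  have hwderiv : ∀ s : ℝ, 0 ≤ s → HasDerivWithinAt vfun (f' s) (Set.Ici 0) s := by
    intro s hs
    have hγ : HasDerivAt (fun s' : ℝ => ((s' : ℝ), α + s' • c)) (1, c) s := by
      refine HasDerivAt.prodMk (hasDerivAt_id' (x := s)) ?_
      simpa using ((hasDerivAt_id' (x := s)).smul_const c).const_add α
    have h1 : HasDerivWithinAt w (F (s, α + s • c) (1, c)) (Set.Ici 0) s := by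
      have h := HasFDerivWithinAt.comp_hasDerivWithinAt s (hFd (s, α + s • c) (hmem s hs _))
        hγ.hasDerivWithinAt (fun s' (hs' : s' ∈ Set.Ici (0:ℝ)) => hmem s' hs' _)
      exact h
    have hkey : F (s, α + s • c) (1, c) = f' s := by
      have hsplit : ((1 : ℝ), c) = ((1:ℝ), (0 : Fin n → ℝ)) + inR c := by
        simp [hinRdef]
      rw [hsplit, map_add, hPDE s hs (α + s • c)]
      have : (F (s, α + s • c)) (inR c) = ((F (s, α + s • c)).comp inR) c := rfl
      rw [this, hf']
      simp only [hv, hw, map_sub]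
      abel
    rw [← hkey]
    exact h1.sub_const c
  have hvcont : ContinuousOn vfun (Set.Icc 0 t) := by
    have hJc : ContinuousOn J S := hreg.continuousOn
    have hγc : ContinuousOn (fun s : ℝ => ((s:ℝ), α + s • c)) (Set.Icc 0 t) :=
      (continuousOn_id.prodMk (by fun_prop))
    have : ContinuousOn w (Set.Icc 0 t) :=
      hJc.comp hγc (fun s hs => hmem s hs.1 _)
    exact this.sub continuousOn_const
  have hFcont : ContinuousOn F S := hreg.continuousOn_fderivWithin hSuniq (by norm_num)
  obtain ⟨K, hK⟩ : ∃ K, ∀ s ∈ Set.Icc (0:ℝ) t,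
      ‖(F (s, α + s • c)).comp inR‖ ≤ K := by
    apply IsCompact.exists_bound_of_continuousOn (isCompact_Icc)
    apply ContinuousOn.clm_comp
    · exact hFcont.comp (continuousOn_id.prodMk (by fun_prop)) (fun s hs => hmem s hs.1 _)
    · exact continuousOn_const
  have hbound : ∀ s ∈ Set.Ico (0:ℝ) t, ‖f' s‖ ≤ K * ‖vfun s‖ + 0 := by
    intro s hs
    rw [hf']
    simp only [norm_neg, add_zero]
    calc ‖((F (s, α + s • c)).comp inR) (vfun s)‖
        ≤ ‖(F (s, α + s • c)).comp inR‖ * ‖vfun s‖ :=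
          ContinuousLinearMap.le_opNorm _ _
      _ ≤ K * ‖vfun s‖ :=
          mul_le_mul_of_nonneg_right (hK s ⟨hs.1, hs.2.le⟩) (norm_nonneg _)
  have h0 : ‖vfun 0‖ ≤ 0 := by
    simp only [hv, hw]
    rw [show α + (0:ℝ) • c = α by simp]
    rw [hinit α]
    simp [hc]
  have hGron := norm_le_gronwallBound_of_norm_deriv_right_le hvcont
    (fun s hs => (hwderiv s hs.1).mono (Set.Ici_subset_Ici.2 hs.1)) h0 hbound
  have hvt : ‖vfun t‖ ≤ 0 := by
    have h2 := hGron t (Set.right_mem_Icc.2 ht)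
    rwa [sub_zero, gronwallBound_ε0_δ0] at h2
  have h3 : vfun t = 0 := norm_le_zero_iff.1 hvt
  have h4 : w t - c = 0 := h3
  exact sub_eq_zero.1 h4

noncomputable def lam (n : ℕ) : ((Fin n → ℝ) →L[ℝ] ℝ) →L[ℝ] (Fin n → ℝ) :=
  ContinuousLinearMap.pi fun i => ContinuousLinearMap.apply ℝ ℝ (bv i)

lemma lam_apply {n : ℕ} (φ : (Fin n → ℝ) →L[ℝ] ℝ) (i : Fin n) : lam n φ i = φ (bv i) := rfl

lemma gradFn_eq {n : ℕ} (Φ : (Fin n → ℝ) → ℝ) :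
    gradFn Φ = fun x => lam n (fderiv ℝ Φ x) := rfl

lemma contDiff_gradFn {n : ℕ} {Φ : (Fin n → ℝ) → ℝ} (hΦ : ContDiff ℝ 3 Φ) :
    ContDiff ℝ 2 (gradFn Φ) := by
  rw [gradFn_eq]
  exact (lam n).contDiff.comp (hΦ.fderiv_right (by norm_num))

lemma fderiv_lam_comp {n : ℕ} {g : (Fin n → ℝ) → ((Fin n → ℝ) →L[ℝ] ℝ)} {x : Fin n → ℝ}
    (hg : DifferentiableAt ℝ g x) :
    fderiv ℝ (fun y => lam n (g y)) x = (lam n).comp (fderiv ℝ g x) :=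
  ((lam n).hasFDerivAt.comp x hg.hasFDerivAt).fderiv

lemma diff_fderiv_of_C3 {n : ℕ} {Φ : (Fin n → ℝ) → ℝ} (hΦ : ContDiff ℝ 3 Φ) (x : Fin n → ℝ) :
    DifferentiableAt ℝ (fderiv ℝ Φ) x :=
  ((hΦ.fderiv_right (m := 2) (by norm_num)).differentiable (by norm_num)).differentiableAt

lemma Hm_entry {n : ℕ} {Φ : (Fin n → ℝ) → ℝ} (hΦ : ContDiff ℝ 3 Φ) (x : Fin n → ℝ)
    (i j : Fin n) :
    fderiv ℝ (gradFn Φ) x (bv j) i = fderiv ℝ (fderiv ℝ Φ) x (bv j) (bv i) := by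
  rw [gradFn_eq, fderiv_lam_comp (diff_fderiv_of_C3 hΦ x)]
  rfl

lemma Hm_symm {n : ℕ} {Φ : (Fin n → ℝ) → ℝ} (hΦ : ContDiff ℝ 3 Φ) (x : Fin n → ℝ)
    (a b : Fin n → ℝ) :
    fderiv ℝ (fderiv ℝ Φ) x a b = fderiv ℝ (fderiv ℝ Φ) x b a :=
  second_derivative_symmetric
    (fun y => ((hΦ.differentiable (by norm_num)).differentiableAt (x := y)).hasFDerivAt)
    ((diff_fderiv_of_C3 hΦ x).hasFDerivAt) a b

lemma hess_entry {n : ℕ} (Φ : (Fin n → ℝ) → ℝ) (x : Fin n → ℝ) (i j : Fin n) :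
    hessMat Φ x i j = fderiv ℝ (fderiv ℝ Φ) x (bv i) (bv j) := by
  show iteratedFDeriv ℝ 2 Φ x ![Pi.single i 1, Pi.single j 1] = _
  rw [iteratedFDeriv_two_apply]
  simp [bv]

lemma key_ineq {n : ℕ} {Φ : (Fin n → ℝ) → ℝ} (hΦ : ContDiff ℝ 3 Φ) {δ : ℝ}
    (hconv : ∀ x : Fin n → ℝ, ∀ v : Fin n → ℝ,
      δ * ∑ i, v i ^ 2 ≤ ∑ i, ∑ j, hessMat Φ x i j * v i * v j)
    (x : Fin n → ℝ) {t : ℝ} (ht : 0 ≤ t) (v : Fin n → ℝ) :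
    (1 + t * δ) * sq' v
      ≤ ∑ i, v i * ((ContinuousLinearMap.id ℝ (Fin n → ℝ)
          + t • fderiv ℝ (gradFn Φ) x) v) i := by
  set Hm := fderiv ℝ (gradFn Φ) x with hHm
  have h1 : ∀ i, ((ContinuousLinearMap.id ℝ (Fin n → ℝ) + t • Hm) v) i
      = v i + t * (Hm v) i := by
    intro i
    simp [ContinuousLinearMap.add_apply, ContinuousLinearMap.smul_apply]
  have h2 : ∀ i, (Hm v) i = ∑ j, v j * (Hm (bv j)) i := fun i => by
    rw [clm_apply_coord]
  have h5 : ∀ i j, (Hm (bv j)) i = hessMat Φ x i j := by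
    intro i j
    rw [hHm, Hm_entry hΦ x i j, Hm_symm hΦ x (bv j) (bv i), ← hess_entry]
  have h3 : ∑ i, v i * (Hm v) i = ∑ i, ∑ j, hessMat Φ x i j * v i * v j := by
    refine Finset.sum_congr rfl fun i _ => ?_
    rw [h2 i, Finset.mul_sum]
    refine Finset.sum_congr rfl fun j _ => ?_
    rw [h5 i j]
    ring
  have h4 : δ * sq' v ≤ ∑ i, v i * (Hm v) i := by
    rw [h3]; exact hconv x v
  calc (1 + t * δ) * sq' v = sq' v + t * (δ * sq' v) := by ring
    _ ≤ sq' v + t * ∑ i, v i * (Hm v) i := by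
        have := mul_le_mul_of_nonneg_left h4 ht
        linarith
    _ = ∑ i, v i * ((ContinuousLinearMap.id ℝ (Fin n → ℝ) + t • Hm) v) i := by
        simp only [sq']
        rw [Finset.mul_sum, ← Finset.sum_add_distrib]
        refine Finset.sum_congr rfl fun i _ => ?_
        rw [h1 i]
        ring

end BurgersAux

set_option maxHeartbeats 1000000 in
/-- under uniform convexity `Hess Φ ≥ δ·I`, for any compact set `Ω ⊆ ℝⁿ` the
second and third spatial derivatives of the potential `U` decay like `(1+t)⁻¹`, resp.
`(1+t)⁻²`, uniformly on the image `Ω(t) = { α + t∇Φ(α) : α ∈ Ω }` of `Ω` under the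
characteristic flow. -/
theorem burgers_potential_decay_on_compact_sets
    (n : ℕ) (Φ : (Fin n → ℝ) → ℝ) (hΦ : ContDiff ℝ 3 Φ)
    (δ : ℝ) (hδ : 0 < δ)
    (hconv : ∀ x : Fin n → ℝ, ∀ v : Fin n → ℝ,
      δ * ∑ i, v i ^ 2 ≤ ∑ i, ∑ j, hessMat Φ x i j * v i * v j)
    (u : ℝ → (Fin n → ℝ) → (Fin n → ℝ))
    (hu : IsGlobalSolBurgers n (gradFn Φ) 2 u)
    (U : ℝ → (Fin n → ℝ) → ℝ)
    (hU : ContDiffOn ℝ 3 (fun p : ℝ × (Fin n → ℝ) => U p.1 p.2) (Set.Ici 0 ×ˢ Set.univ))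
    (hpot : ∀ t ∈ Set.Ici (0 : ℝ), ∀ x : Fin n → ℝ, ∀ i : Fin n,
      u t x i = fderiv ℝ (U t) x (Pi.single i 1)) :
    ∀ Ω : Set (Fin n → ℝ), IsCompact Ω →
      ∃ C₃ > (0:ℝ), ∃ C₄ > (0:ℝ),
        ∀ t ∈ Set.Ici (0 : ℝ), ∀ α ∈ Ω,
          ‖iteratedFDeriv ℝ 2 (U t) (α + t • gradFn Φ α)‖ ≤ C₃ * (1 + t)⁻¹ ∧
          ‖iteratedFDeriv ℝ 3 (U t) (α + t • gradFn Φ α)‖ ≤ C₄ * ((1 + t) ^ 2)⁻¹ := by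
  intro Ω hΩ
  have hgrad : ContDiff ℝ 2 (gradFn Φ) := contDiff_gradFn hΦ
  set Hm : (Fin n → ℝ) → (Fin n → ℝ) →L[ℝ] (Fin n → ℝ) := fderiv ℝ (gradFn Φ) with hHmdef
  have hHmC : ContDiff ℝ 1 Hm := hgrad.fderiv_right (by norm_num)
  have hHmcont : Continuous Hm := hHmC.continuous
  set Hd : (Fin n → ℝ) → (Fin n → ℝ) →L[ℝ] ((Fin n → ℝ) →L[ℝ] (Fin n → ℝ)) :=
    fderiv ℝ Hm with hHddef
  have hHdcont : Continuous Hd := hHmC.continuous_fderiv (by norm_num)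
  obtain ⟨M1', hM1'⟩ : ∃ C, ∀ x ∈ Ω, ‖Hm x‖ ≤ C :=
    hΩ.exists_bound_of_continuousOn hHmcont.continuousOn
  obtain ⟨M2', hM2'⟩ : ∃ C, ∀ x ∈ Ω, ‖Hd x‖ ≤ C :=
    IsCompact.exists_bound_of_continuousOn
      (E := (Fin n → ℝ) →L[ℝ] ((Fin n → ℝ) →L[ℝ] (Fin n → ℝ))) hΩ hHdcont.continuousOn
  set M1 := max M1' 0 with hM1def
  set M2 := max M2' 0 with hM2def
  have hM1nn : 0 ≤ M1 := le_max_right _ _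
  have hM2nn : 0 ≤ M2 := le_max_right _ _
  have hM1 : ∀ α ∈ Ω, ∀ i j, |Hm α (bv j) i| ≤ M1 := by
    intro α hα i j
    calc |Hm α (bv j) i| ≤ ‖Hm α (bv j)‖ := by
          rw [← Real.norm_eq_abs]; exact norm_le_pi_norm _ i
      _ ≤ ‖Hm α‖ * ‖(bv j : Fin n → ℝ)‖ := ContinuousLinearMap.le_opNorm _ _
      _ ≤ M1' * 1 := mul_le_mul (hM1' α hα) (bv_norm_le j) (norm_nonneg _)
          ((norm_nonneg _).trans (hM1' α hα))
      _ ≤ M1 := by rw [mul_one]; exact le_max_left _ _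
  have hM2 : ∀ α ∈ Ω, ∀ p l i, |Hd α (bv p) (bv l) i| ≤ M2 := by
    intro α hα p l i
    calc |Hd α (bv p) (bv l) i| ≤ ‖Hd α (bv p) (bv l)‖ := by
          rw [← Real.norm_eq_abs]; exact norm_le_pi_norm _ i
      _ ≤ ‖Hd α (bv p)‖ * ‖(bv l : Fin n → ℝ)‖ := ContinuousLinearMap.le_opNorm _ _
      _ ≤ ‖Hd α (bv p)‖ * 1 := by
          gcongr
          exact bv_norm_le l
      _ = ‖Hd α (bv p)‖ := mul_one _
      _ ≤ ‖Hd α‖ * ‖(bv p : Fin n → ℝ)‖ := ContinuousLinearMap.le_opNorm _ _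
      _ ≤ M2' * 1 := mul_le_mul (hM2' α hα) (bv_norm_le p) (norm_nonneg _)
          ((norm_nonneg (Hd α)).trans (hM2' α hα))
      _ ≤ M2 := by rw [mul_one]; exact le_max_left _ _
  set c1 : ℝ := max 1 δ⁻¹ with hc1def
  have hc1ge1 : (1:ℝ) ≤ c1 := le_max_left _ _
  have hc1δ : (1:ℝ) ≤ c1 * δ := by
    have h := le_max_right 1 δ⁻¹
    calc (1:ℝ) = δ⁻¹ * δ := by field_simp
      _ ≤ c1 * δ := mul_le_mul_of_nonneg_right h hδ.le
  set K4 : ℝ := (n:ℝ)^2 * M2 + (n:ℝ)^4 * M1 * M2 * δ⁻¹ with hK4def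
  have hK4nn : 0 ≤ K4 := by positivity
  refine ⟨(n:ℝ)^4 * M1 * c1 + 1, by positivity, (n:ℝ)^3 * K4 * c1^2 + 1, by positivity, ?_⟩
  intro t ht α hα
  have ht' : (0:ℝ) ≤ t := ht
  have hq0 : (0:ℝ) < 1 + t * δ := by nlinarith
  set q : ℝ := (1 + t * δ)⁻¹ with hqdef
  have hqnn : 0 ≤ q := by positivity
  have hqle : q ≤ c1 * (1 + t)⁻¹ := by
    rw [hqdef, show c1 * (1+t)⁻¹ = c1 / (1+t) by rw [div_eq_mul_inv],
      inv_eq_one_div, div_le_div_iff₀ hq0 (by linarith)]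
    nlinarith
  have htq : t * q ≤ δ⁻¹ := by
    rw [hqdef]
    rw [show t * (1 + t*δ)⁻¹ = t / (1 + t*δ) by rw [div_eq_mul_inv]]
    rw [div_le_iff₀ hq0]
    have : δ⁻¹ * (1 + t * δ) = δ⁻¹ + t := by field_simp
    rw [this]
    have : (0:ℝ) ≤ δ⁻¹ := by positivity
    linarith
  -- slice regularity
  have hUt : ContDiff ℝ 3 (U t) := by
    have h1 : ContDiffOn ℝ 3 ((fun p : ℝ × (Fin n → ℝ) => U p.1 p.2)
        ∘ (fun x : Fin n → ℝ => ((t:ℝ), x))) Set.univ :=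
      hU.comp (ContDiff.prodMk contDiff_const contDiff_id).contDiffOn
        (fun x _ => ⟨ht', trivial⟩)
    rw [contDiffOn_univ] at h1
    exact h1
  set g : (Fin n → ℝ) → ((Fin n → ℝ) →L[ℝ] ℝ) := fderiv ℝ (U t) with hgdef
  have hgC : ContDiff ℝ 2 g := hUt.fderiv_right (by norm_num)
  have hu_eq : u t = fun y => lam n (g y) := by
    funext y i
    exact hpot t ht y i
  have hut : ContDiff ℝ 2 (u t) := by
    rw [hu_eq]; exact (lam n).contDiff.comp hgC
  -- characteristic map and first-order identity
  set ψ : (Fin n → ℝ) → (Fin n → ℝ) := fun β => β + t • gradFn Φ β with hψdef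
  set A : (Fin n → ℝ) → (Fin n → ℝ) →L[ℝ] (Fin n → ℝ) :=
    fun β => ContinuousLinearMap.id ℝ (Fin n → ℝ) + t • Hm β with hAdef
  have hψd : ∀ β, HasFDerivAt ψ (A β) β := by
    intro β
    exact (hasFDerivAt_id β).add
      (((hgrad.differentiable (by norm_num)) β).hasFDerivAt.const_smul t)
  have hconst : ∀ β, u t (ψ β) = gradFn Φ β := fun β => constancy ⟨hu.1, hu.2.1, hu.2.2⟩ β ht'
  have hid1 : ∀ β, (fderiv ℝ (u t) (ψ β)).comp (A β) = Hm β := by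
    intro β
    have hcomp : HasFDerivAt (fun β' => u t (ψ β'))
        ((fderiv ℝ (u t) (ψ β)).comp (A β)) β :=
      ((hut.differentiable (by norm_num)) (ψ β)).hasFDerivAt.comp β (hψd β)
    have h2 : HasFDerivAt (gradFn Φ) ((fderiv ℝ (u t) (ψ β)).comp (A β)) β := by
      rwa [show (fun β' => u t (ψ β')) = gradFn Φ from funext hconst] at hcomp
    exact h2.unique ((hgrad.differentiable (by norm_num)) β).hasFDerivAt
  -- inverse of A α
  obtain ⟨B, hAB, hBA, hBsq⟩ := inverse_exists (A α) hq0
    (fun v => key_ineq hΦ hconv α ht' v)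
  have hBsq' : ∀ w, sq' (B w) ≤ sq' w * q ^ 2 := by
    intro w
    have h2 : (0:ℝ) < (1 + t*δ)^2 := by positivity
    have h3 : sq' (B w) ≤ sq' w / (1 + t*δ)^2 := by
      rw [le_div_iff₀ h2, mul_comm]
      exact hBsq w
    rwa [div_eq_mul_inv, ← inv_pow, ← hqdef] at h3
  have hcoordB : ∀ (w : Fin n → ℝ) (l : Fin n) (a : ℝ), 0 ≤ a → sq' w ≤ a^2
      → |B w l| ≤ a * q := by
    intro w l a ha hw
    have h1 : (B w l)^2 ≤ (a*q)^2 := by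
      calc (B w l)^2 ≤ sq' (B w) := coord_sq_le_sq' _ l
        _ ≤ sq' w * q^2 := hBsq' w
        _ ≤ a^2 * q^2 := mul_le_mul_of_nonneg_right hw (sq_nonneg q)
        _ = (a*q)^2 := by ring
    exact abs_le_of_sq_le_sq h1 (mul_nonneg ha hqnn)
  -- applying Hm α with coordinate bounds
  have hHm_apply : ∀ (y : Fin n → ℝ) (a : ℝ), 0 ≤ a → (∀ l, |y l| ≤ a) →
      ∀ i, |Hm α y i| ≤ n * M1 * a := by
    intro y a ha hy i
    rw [clm_apply_coord]
    calc |∑ l, y l * Hm α (bv l) i| ≤ ∑ l, |y l * Hm α (bv l) i| :=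
          Finset.abs_sum_le_sum_abs _ _
      _ ≤ ∑ _l : Fin n, a * M1 := by
          refine Finset.sum_le_sum fun l _ => ?_
          rw [abs_mul]
          exact mul_le_mul (hy l) (hM1 α hα i l) (abs_nonneg _) ha
      _ = n * (a * M1) := by simp [Finset.sum_const, Finset.card_univ, nsmul_eq_mul]
      _ = n * M1 * a := by ring
  -- the Jacobian of u t at ψ α factors through B
  set Du : (Fin n → ℝ) →L[ℝ] (Fin n → ℝ) := fderiv ℝ (u t) (ψ α) with hDudef
  have hDuB : ∀ w, Du w = Hm α (B w) := by
    intro w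
    conv_lhs => rw [← hAB w]
    exact congrArg (fun (T : (Fin n → ℝ) →L[ℝ] (Fin n → ℝ)) => T (B w)) (hid1 α)
  have hDu_bound : ∀ (w : Fin n → ℝ) (a : ℝ), 0 ≤ a → (∀ l, |w l| ≤ a) →
      ∀ i, |Du w i| ≤ n * M1 * (n * a * q) := by
    intro w a ha hw i
    have hn1 : (1:ℝ) ≤ n := by
      have : 0 < n := i.pos
      exact_mod_cast this
    rw [hDuB w]
    apply hHm_apply (B w) (n * a * q)
      (mul_nonneg (mul_nonneg (Nat.cast_nonneg n) ha) hqnn)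
    intro l
    apply hcoordB w l (n * a) (mul_nonneg (Nat.cast_nonneg n) ha)
    calc sq' w ≤ n * a^2 := sq'_le_of_coord w a ha hw
      _ ≤ ((n:ℝ)*(n:ℝ)) * a^2 := mul_le_mul_of_nonneg_right
          (le_mul_of_one_le_left (Nat.cast_nonneg n) hn1) (sq_nonneg a)
      _ = (n*a)^2 := by ring
  -- second-order identity
  set S2 : (Fin n → ℝ) →L[ℝ] ((Fin n → ℝ) →L[ℝ] (Fin n → ℝ)) :=
    fderiv ℝ (fderiv ℝ (u t)) (ψ α) with hS2def
  have hutd1C : ContDiff ℝ 1 (fderiv ℝ (u t)) := hut.fderiv_right (by norm_num)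
  have hid2 : ∀ v z, Du ((t • Hd α v) z) + S2 (A α v) (A α z) = Hd α v z := by
    have hf1 : HasFDerivAt (fun β => fderiv ℝ (u t) (ψ β)) (S2.comp (A α)) α :=
      ((hutd1C.differentiable (by norm_num)) (ψ α)).hasFDerivAt.comp α (hψd α)
    have hf2 : HasFDerivAt A (t • Hd α) α := by
      have h := (((hHmC.differentiable (by norm_num)) α).hasFDerivAt.const_smul t).const_add
        (ContinuousLinearMap.id ℝ (Fin n → ℝ))
      exact h
    have hcc := hf1.clm_comp hf2
    rw [show (fun β => (fderiv ℝ (u t) (ψ β)).comp (A β)) = Hm from funext hid1] at hcc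
    have hDeq := hcc.unique ((hHmC.differentiable (by norm_num)) α).hasFDerivAt
    intro v z
    have h1 := ContinuousLinearMap.ext_iff.1 hDeq v
    have h2 := ContinuousLinearMap.ext_iff.1 h1 z
    simpa [ContinuousLinearMap.add_apply, ContinuousLinearMap.comp_apply,
      ContinuousLinearMap.compL_apply, ContinuousLinearMap.flip_apply,
      ContinuousLinearMap.smul_apply, hDudef] using h2
  -- Hd application bound
  have hHd_apply : ∀ (v z : Fin n → ℝ) (a b : ℝ), 0 ≤ a → 0 ≤ b →
      (∀ l, |v l| ≤ a) → (∀ l, |z l| ≤ b) →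
      ∀ i, |Hd α v z i| ≤ (n:ℝ)^2 * M2 * a * b := by
    intro v z a b ha hb hv hz i
    have hexp : Hd α v z i = ∑ p, v p * (Hd α (bv p) z i) := by
      rw [clm_apply_eq_sum (Hd α) v]
      simp [ContinuousLinearMap.sum_apply, Finset.sum_apply, ContinuousLinearMap.smul_apply]
    rw [hexp]
    calc |∑ p, v p * Hd α (bv p) z i| ≤ ∑ p, |v p * Hd α (bv p) z i| :=
          Finset.abs_sum_le_sum_abs _ _
      _ ≤ ∑ _p : Fin n, a * ((n:ℝ) * M2 * b) := by
          refine Finset.sum_le_sum fun p _ => ?_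
          rw [abs_mul]
          refine mul_le_mul (hv p) ?_ (abs_nonneg _) ha
          have hexp2 : Hd α (bv p) z i = ∑ l, z l * Hd α (bv p) (bv l) i :=
            clm_apply_coord (Hd α (bv p)) z i
          rw [hexp2]
          calc |∑ l, z l * Hd α (bv p) (bv l) i| ≤ ∑ l, |z l * Hd α (bv p) (bv l) i| :=
                Finset.abs_sum_le_sum_abs _ _
            _ ≤ ∑ _l : Fin n, b * M2 := by
                refine Finset.sum_le_sum fun l _ => ?_
                rw [abs_mul]
                exact mul_le_mul (hz l) (hM2 α hα p l i) (abs_nonneg _) hb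
            _ = (n:ℝ) * (b * M2) := by
                simp [Finset.sum_const, Finset.card_univ, nsmul_eq_mul]
            _ = (n:ℝ) * M2 * b := by ring
      _ = (n:ℝ) * (a * ((n:ℝ) * M2 * b)) := by
          simp [Finset.sum_const, Finset.card_univ, nsmul_eq_mul]
      _ = (n:ℝ)^2 * M2 * a * b := by ring
  -- entry bound for S2
  have hS2_entry : ∀ m j i, |S2 (bv m) (bv j) i| ≤ K4 * q^2 := by
    intro m j i
    have hn1 : (1:ℝ) ≤ n := by
      have : 0 < n := i.pos
      exact_mod_cast this
    have hvB : ∀ l, |B (bv m) l| ≤ 1 * q := fun l =>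
      hcoordB (bv m) l 1 zero_le_one (by rw [sq'_bv]; norm_num)
    have hzB : ∀ l, |B (bv j) l| ≤ 1 * q := fun l =>
      hcoordB (bv j) l 1 zero_le_one (by rw [sq'_bv]; norm_num)
    have h1q : (0:ℝ) ≤ 1 * q := by rw [one_mul]; exact hqnn
    have hnM2q : (0:ℝ) ≤ (n:ℝ)^2 * M2 * (1*q) * (1*q) :=
      mul_nonneg (mul_nonneg (mul_nonneg (by positivity) hM2nn) h1q) h1q
    have hkey := hid2 (B (bv m)) (B (bv j))
    rw [hAB, hAB] at hkey
    have hS2v : S2 (bv m) (bv j) i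
        = Hd α (B (bv m)) (B (bv j)) i - Du ((t • Hd α (B (bv m))) (B (bv j))) i := by
      have := congrFun (congrArg (fun (y : Fin n → ℝ) => (y : Fin n → ℝ)) hkey) i
      have h2 : Du ((t • Hd α (B (bv m))) (B (bv j))) i + S2 (bv m) (bv j) i
          = Hd α (B (bv m)) (B (bv j)) i := by
        have h3 := congrFun hkey i
        simpa using h3
      linarith
    rw [hS2v]
    have hterm1 : |Hd α (B (bv m)) (B (bv j)) i| ≤ (n:ℝ)^2 * M2 * (1*q) * (1*q) :=
      hHd_apply (B (bv m)) (B (bv j)) (1*q) (1*q) h1q h1q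
        hvB hzB i
    have hw_coord : ∀ l, |Hd α (B (bv m)) (B (bv j)) l| ≤ (n:ℝ)^2 * M2 * (1*q) * (1*q) :=
      fun l => hHd_apply (B (bv m)) (B (bv j)) (1*q) (1*q) h1q h1q
        hvB hzB l
    have hterm2 : |Du ((t • Hd α (B (bv m))) (B (bv j))) i|
        ≤ t * (n * M1 * (n * ((n:ℝ)^2 * M2 * (1*q) * (1*q)) * q)) := by
      have hsmul : (t • Hd α (B (bv m))) (B (bv j)) = t • (Hd α (B (bv m)) (B (bv j))) := by
        simp [ContinuousLinearMap.smul_apply]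
      rw [hsmul, map_smul]
      have : |(t • Du (Hd α (B (bv m)) (B (bv j)))) i|
          = t * |Du (Hd α (B (bv m)) (B (bv j))) i| := by
        simp [abs_mul, abs_of_nonneg ht']
      rw [this]
      have := hDu_bound (Hd α (B (bv m)) (B (bv j))) ((n:ℝ)^2 * M2 * (1*q) * (1*q))
        hnM2q hw_coord i
      exact mul_le_mul_of_nonneg_left this ht'
    calc |Hd α (B (bv m)) (B (bv j)) i - Du ((t • Hd α (B (bv m))) (B (bv j))) i|
        ≤ |Hd α (B (bv m)) (B (bv j)) i| + |Du ((t • Hd α (B (bv m))) (B (bv j))) i| :=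
          abs_sub _ _
      _ ≤ (n:ℝ)^2 * M2 * (1*q) * (1*q)
          + t * (n * M1 * (n * ((n:ℝ)^2 * M2 * (1*q) * (1*q)) * q)) := by
          exact add_le_add hterm1 hterm2
      _ = (n:ℝ)^2 * M2 * q^2 + (t*q) * ((n:ℝ)^4 * M1 * M2 * q^2) := by ring
      _ ≤ (n:ℝ)^2 * M2 * q^2 + δ⁻¹ * ((n:ℝ)^4 * M1 * M2 * q^2) := by
          refine add_le_add_right (mul_le_mul_of_nonneg_right htq ?_) _
          exact mul_nonneg (mul_nonneg (mul_nonneg (by positivity) hM1nn) hM2nn)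
            (sq_nonneg q)
      _ = K4 * q^2 := by rw [hK4def]; ring
  -- relating iterated derivatives of U to Du and S2
  have hDut : ∀ x, fderiv ℝ (u t) x = (lam n).comp (fderiv ℝ g x) := by
    intro x
    rw [hu_eq]
    exact fderiv_lam_comp ((hgC.differentiable (by norm_num)) x)
  have hiFD2_entry : ∀ (d : Fin 2 → Fin n),
      iteratedFDeriv ℝ 2 (U t) (ψ α) (fun p => bv (d p)) = Du (bv (d 0)) (d 1) := by
    intro d
    rw [iteratedFDeriv_two_apply]
    rw [hDudef, hDut (ψ α)]
    rfl
  have hiFD3_entry : ∀ (d : Fin 3 → Fin n),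
      iteratedFDeriv ℝ 3 (U t) (ψ α) (fun p => bv (d p)) = S2 (bv (d 0)) (bv (d 1)) (d 2) := by
    intro d
    have h1 : iteratedFDeriv ℝ 3 (U t) (ψ α) (fun p => bv (d p))
        = iteratedFDeriv ℝ 2 (fun y => fderiv ℝ (U t) y) (ψ α)
            (Fin.init (fun p => bv (d p))) ((fun p => bv (d p)) (Fin.last 2)) :=
      iteratedFDeriv_succ_apply_right _
    rw [h1, iteratedFDeriv_two_apply]
    have hS2c : S2 = (ContinuousLinearMap.compL ℝ (Fin n → ℝ) ((Fin n → ℝ) →L[ℝ] ℝ)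
        (Fin n → ℝ) (lam n)).comp (fderiv ℝ (fderiv ℝ g) (ψ α)) := by
      rw [hS2def]
      have hfeq : fderiv ℝ (u t) = fun x => (ContinuousLinearMap.compL ℝ (Fin n → ℝ)
          ((Fin n → ℝ) →L[ℝ] ℝ) (Fin n → ℝ) (lam n)) (fderiv ℝ g x) := by
        funext x
        rw [hDut x]
        rfl
      rw [hfeq]
      exact ((ContinuousLinearMap.compL ℝ (Fin n → ℝ) ((Fin n → ℝ) →L[ℝ] ℝ)
        (Fin n → ℝ) (lam n)).hasFDerivAt.comp (ψ α)
        (((hgC.fderiv_right (m := 1) (by norm_num)).differentiable (by norm_num)) (ψ α)).hasFDerivAt).fderiv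
    have hfg : (fun y => fderiv ℝ (U t) y) = g := by rw [hgdef]
    rw [hfg]
    rw [hS2c]
    have hinit0 : Fin.init (fun p : Fin 3 => bv (d p)) 0 = bv (d 0) := rfl
    have hinit1 : Fin.init (fun p : Fin 3 => bv (d p)) 1 = bv (d 1) := rfl
    have hlast : (fun p : Fin 3 => bv (d p)) (Fin.last 2) = bv (d 2) := rfl
    rw [hinit0, hinit1, hlast]
    rfl
  -- final bounds
  have hq2 : q^2 ≤ c1^2 * ((1+t)^2)⁻¹ := by
    have := mul_le_mul hqle hqle hqnn
      (mul_nonneg (by positivity) (inv_nonneg.2 (by linarith)))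
    calc q^2 = q * q := sq q
      _ ≤ (c1 * (1+t)⁻¹) * (c1 * (1+t)⁻¹) := this
      _ = c1^2 * ((1+t)^2)⁻¹ := by
          rw [← inv_pow]
          ring
  constructor
  · -- second derivative bound
    calc ‖iteratedFDeriv ℝ 2 (U t) (α + t • gradFn Φ α)‖
        ≤ ∑ d : Fin 2 → Fin n, ‖iteratedFDeriv ℝ 2 (U t) (ψ α) (fun p => bv (d p))‖ :=
          multilinear_norm_le_sum _
      _ ≤ ∑ _d : Fin 2 → Fin n, (n:ℝ) * M1 * ((n:ℝ) * 1 * q) := by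
          refine Finset.sum_le_sum fun d _ => ?_
          rw [hiFD2_entry d, Real.norm_eq_abs]
          exact hDu_bound (bv (d 0)) 1 zero_le_one (bv_coord_le (d 0)) (d 1)
      _ = (n:ℝ)^2 * ((n:ℝ) * M1 * ((n:ℝ) * 1 * q)) := by
          rw [Finset.sum_const, Finset.card_univ, nsmul_eq_mul]
          congr 1
          simp [Fintype.card_fun]
      _ = (n:ℝ)^4 * M1 * q := by ring
      _ ≤ (n:ℝ)^4 * M1 * (c1 * (1+t)⁻¹) :=
          mul_le_mul_of_nonneg_left hqle (mul_nonneg (by positivity) hM1nn)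
      _ = ((n:ℝ)^4 * M1 * c1) * (1+t)⁻¹ := by ring
      _ ≤ ((n:ℝ)^4 * M1 * c1 + 1) * (1+t)⁻¹ :=
          mul_le_mul_of_nonneg_right (by linarith) (inv_nonneg.2 (by linarith))
  · -- third derivative bound
    calc ‖iteratedFDeriv ℝ 3 (U t) (α + t • gradFn Φ α)‖
        ≤ ∑ d : Fin 3 → Fin n, ‖iteratedFDeriv ℝ 3 (U t) (ψ α) (fun p => bv (d p))‖ :=
          multilinear_norm_le_sum _
      _ ≤ ∑ _d : Fin 3 → Fin n, K4 * q^2 := by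
          refine Finset.sum_le_sum fun d _ => ?_
          rw [hiFD3_entry d, Real.norm_eq_abs]
          exact hS2_entry (d 0) (d 1) (d 2)
      _ = (n:ℝ)^3 * (K4 * q^2) := by
          rw [Finset.sum_const, Finset.card_univ, nsmul_eq_mul]
          congr 1
          simp [Fintype.card_fun]
      _ = (n:ℝ)^3 * K4 * q^2 := by ring
      _ ≤ (n:ℝ)^3 * K4 * (c1^2 * ((1+t)^2)⁻¹) :=
          mul_le_mul_of_nonneg_left hq2 (mul_nonneg (by positivity) hK4nn)
      _ = ((n:ℝ)^3 * K4 * c1^2) * ((1+t)^2)⁻¹ := by ring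
      _ ≤ ((n:ℝ)^3 * K4 * c1^2 + 1) * ((1+t)^2)⁻¹ :=
          mul_le_mul_of_nonneg_right (by linarith)
            (inv_nonneg.2 (by positivity))
end
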